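/- arXiv:1712.01054 — 6 statements merged into one kernel-verified Lean document; each statement's English description precedes it below -/
import Mathlib

section
/- If f and g are monic polynomials with integer coefficients and nonzero resultant r, then the quotient ring ℤ[x]/(f, g) is finite and its cardinality equals |r|. -/
open Polynomial

/-- The Sylvester matrix of two polynomials over `ℤ`. -/
def sylvester (f g : Polynomial ℤ) :
    Matrix (Fin (g.natDegree + f.natDegree)) (Fin (g.natDegree + f.natDegree)) ℤ :=
  Matrix.of fun i j =>
    if (i : ℕ) < g.natDegree then
      if (j : ℕ) ≤ (i : ℕ) + f.natDegree then f.coeff (f.natDegree + i - j) else 0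
    else
      if (j : ℕ) ≤ ((i : ℕ) - g.natDegree) + g.natDegree then
        g.coeff (g.natDegree + ((i : ℕ) - g.natDegree) - j) else 0

/-- The resultant of two polynomials, as the determinant of the Sylvester matrix. -/
def resultant (f g : Polynomial ℤ) : ℤ := (_root_.sylvester f g).det

noncomputable def Pmap (N : ℕ) : (Fin N → ℤ) →ₗ[ℤ] Polynomial ℤ where
  toFun v := ∑ j : Fin N, Polynomial.C (v j) * Polynomial.X ^ (N - 1 - (j : ℕ))
  map_add' v w := by simp [add_mul, Finset.sum_add_distrib]
  map_smul' c v := by simp [Finset.mul_sum, mul_assoc]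

lemma Pmap_coeff_lt {N : ℕ} (v : Fin N → ℤ) {d : ℕ} (hd : d < N) :
    (Pmap N v).coeff d = v ⟨N - 1 - d, by omega⟩ := by
  simp only [Pmap, LinearMap.coe_mk, AddHom.coe_mk, finset_sum_coeff, coeff_C_mul, coeff_X_pow,
    mul_ite, mul_one, mul_zero]
  rw [Finset.sum_eq_single (⟨N - 1 - d, by omega⟩ : Fin N)]
  · rw [if_pos (by simp only [Fin.val_mk]; omega)]
  · intro j _ hj
    rw [if_neg]
    intro h
    exact hj (Fin.ext (by simp only [Fin.val_mk]; have := j.isLt; omega))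
  · simp

lemma Pmap_coeff_ge {N : ℕ} (v : Fin N → ℤ) {d : ℕ} (hd : N ≤ d) :
    (Pmap N v).coeff d = 0 := by
  simp only [Pmap, LinearMap.coe_mk, AddHom.coe_mk, finset_sum_coeff, coeff_C_mul, coeff_X_pow,
    mul_ite, mul_one, mul_zero]
  apply Finset.sum_eq_zero
  intro j _
  rw [if_neg]
  have := j.isLt
  omega

lemma Pmap_degree_lt {N : ℕ} (v : Fin N → ℤ) : (Pmap N v).degree < (N : WithBot ℕ) := by
  rw [Polynomial.degree_lt_iff_coeff_zero]
  exact fun d hd => Pmap_coeff_ge v (by exact_mod_cast hd)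

lemma Pmap_eq_self {N : ℕ} {p : Polynomial ℤ} (hp : p.degree < (N : WithBot ℕ)) :
    Pmap N (fun j => p.coeff (N - 1 - (j : ℕ))) = p := by
  ext d
  by_cases hd : d < N
  · rw [Pmap_coeff_lt _ hd]
    simp only [Fin.val_mk]
    congr 1
    omega
  · rw [Pmap_coeff_ge _ (by omega), Polynomial.coeff_eq_zero_of_degree_lt]
    exact lt_of_lt_of_le hp (by exact_mod_cast Nat.le_of_not_lt hd)

lemma Pmap_injective {N : ℕ} : Function.Injective (Pmap N) := by
  intro v w h
  funext j
  have hj : (j : ℕ) < N := j.isLt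
  have h1 := Pmap_coeff_lt v (d := N - 1 - (j : ℕ)) (by omega)
  have h2 := Pmap_coeff_lt w (d := N - 1 - (j : ℕ)) (by omega)
  rw [h, h2] at h1
  have hje : (⟨N - 1 - (N - 1 - (j : ℕ)), by omega⟩ : Fin N) = j :=
    Fin.ext (by simp only [Fin.val_mk]; omega)
  rwa [hje, eq_comm] at h1

lemma Pmap_single {N : ℕ} (j : Fin N) :
    Pmap N (Pi.single j 1) = Polynomial.X ^ (N - 1 - (j : ℕ)) := by
  simp only [Pmap, LinearMap.coe_mk, AddHom.coe_mk]
  rw [Finset.sum_eq_single j]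
  · simp
  · intro i _ hij
    rw [Pi.single_eq_of_ne hij]
    simp
  · simp

lemma sylvester_row_lt (f g : Polynomial ℤ) (i : Fin (g.natDegree + f.natDegree))
    (hi : (i : ℕ) < g.natDegree) :
    Pmap _ (fun j => sylvester f g i j) = X ^ (g.natDegree - 1 - (i : ℕ)) * f := by
  ext d
  rw [mul_comm, Polynomial.coeff_mul_X_pow']
  by_cases hd : d < g.natDegree + f.natDegree
  · rw [Pmap_coeff_lt _ hd]
    simp only [_root_.sylvester, Matrix.of_apply, if_pos hi, Fin.val_mk]
    split_ifs with h1 h2 h2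
    · congr 1
      omega
    · exfalso; omega
    · exfalso; omega
    · rfl
  · rw [Pmap_coeff_ge _ (by omega)]
    split_ifs with hc
    · exact (Polynomial.coeff_eq_zero_of_natDegree_lt (by omega)).symm
    · rfl

lemma sylvester_row_ge (f g : Polynomial ℤ) (i : Fin (g.natDegree + f.natDegree))
    (hi : g.natDegree ≤ (i : ℕ)) :
    Pmap _ (fun j => sylvester f g i j)
      = X ^ (f.natDegree - 1 - ((i : ℕ) - g.natDegree)) * g := by
  have hiN : (i : ℕ) < g.natDegree + f.natDegree := i.isLt
  ext d
  rw [mul_comm, Polynomial.coeff_mul_X_pow']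
  by_cases hd : d < g.natDegree + f.natDegree
  · rw [Pmap_coeff_lt _ hd]
    simp only [_root_.sylvester, Matrix.of_apply, if_neg (by omega : ¬ (i : ℕ) < g.natDegree),
      Fin.val_mk]
    split_ifs with h1 h2 h2
    · congr 1
      omega
    · exfalso; omega
    · exfalso; omega
    · rfl
  · rw [Pmap_coeff_ge _ (by omega)]
    split_ifs with hc
    · exact (Polynomial.coeff_eq_zero_of_natDegree_lt (by omega)).symm
    · rfl

lemma funLeft_castAdd_single_lt {n m : ℕ} (i : Fin (n + m)) (hi : (i : ℕ) < n) :
    (fun i' : Fin n => (Pi.single i 1 : Fin (n+m) → ℤ) (Fin.castAdd m i')) = Pi.single ⟨(i:ℕ), hi⟩ 1 := by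
  funext i'
  simp only [Pi.single_apply]
  congr 1
  simp only [eq_iff_iff, Fin.ext_iff, Fin.coe_castAdd, Fin.val_mk]

lemma funLeft_castAdd_single_ge {n m : ℕ} (i : Fin (n + m)) (hi : n ≤ (i : ℕ)) :
    (fun i' : Fin n => (Pi.single i 1 : Fin (n+m) → ℤ) (Fin.castAdd m i')) = 0 := by
  funext i'
  simp only [Pi.single_apply, Pi.zero_apply, ite_eq_right_iff]
  intro h
  exfalso
  have : (Fin.castAdd m i' : ℕ) = (i : ℕ) := by rw [h]
  have hi' := i'.isLt
  simp only [Fin.coe_castAdd] at this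
  omega

lemma funLeft_natAdd_single_lt {n m : ℕ} (i : Fin (n + m)) (hi : (i : ℕ) < n) :
    (fun k : Fin m => (Pi.single i 1 : Fin (n+m) → ℤ) (Fin.natAdd n k)) = 0 := by
  funext k
  simp only [Pi.single_apply, Pi.zero_apply, ite_eq_right_iff]
  intro h
  exfalso
  have : (Fin.natAdd n k : ℕ) = (i : ℕ) := by rw [h]
  simp only [Fin.coe_natAdd] at this
  omega

lemma funLeft_natAdd_single_ge {n m : ℕ} (i : Fin (n + m)) (hi : n ≤ (i : ℕ)) :
    (fun k : Fin m => (Pi.single i 1 : Fin (n+m) → ℤ) (Fin.natAdd n k))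
      = Pi.single ⟨(i:ℕ) - n, by have := i.isLt; omega⟩ 1 := by
  funext k
  simp only [Pi.single_apply]
  congr 1
  simp only [eq_iff_iff, Fin.ext_iff, Fin.coe_natAdd, Fin.val_mk]
  omega

open Matrix in
lemma Pmap_toLin_sylvester (f g : Polynomial ℤ) (u : Fin (g.natDegree + f.natDegree) → ℤ) :
    Pmap _ (Matrix.toLin' (sylvester f g)ᵀ u)
      = (Pmap g.natDegree fun i => u (Fin.castAdd f.natDegree i)) * f
        + (Pmap f.natDegree fun k => u (Fin.natAdd g.natDegree k)) * g := by
  have key : (Pmap (g.natDegree + f.natDegree)) ∘ₗ Matrix.toLin' (sylvester f g)ᵀ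
      = ((LinearMap.mulRight ℤ f) ∘ₗ (Pmap g.natDegree) ∘ₗ
          (LinearMap.funLeft ℤ ℤ (Fin.castAdd f.natDegree)))
        + ((LinearMap.mulRight ℤ g) ∘ₗ (Pmap f.natDegree) ∘ₗ
          (LinearMap.funLeft ℤ ℤ (Fin.natAdd g.natDegree))) := by
    apply LinearMap.pi_ext
    intro i x
    have hx : Pi.single i x = x • (Pi.single i 1 : Fin (g.natDegree + f.natDegree) → ℤ) := by
      funext j
      simp [Pi.single_apply, mul_comm]
    rw [hx, _root_.map_smul, _root_.map_smul]
    congr 1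
    simp only [LinearMap.comp_apply, LinearMap.add_apply, LinearMap.funLeft_apply,
      LinearMap.mulRight_apply]
    rw [Matrix.toLin'_apply, Matrix.mulVec_single_one]
    have e1 : (LinearMap.funLeft ℤ ℤ (Fin.castAdd f.natDegree))
        ((Pi.single i 1 : Fin (g.natDegree + f.natDegree) → ℤ))
        = (fun i' : Fin g.natDegree =>
            (Pi.single i 1 : Fin (g.natDegree + f.natDegree) → ℤ) (Fin.castAdd f.natDegree i')) :=
      rfl
    have e2 : (LinearMap.funLeft ℤ ℤ (Fin.natAdd g.natDegree))
        ((Pi.single i 1 : Fin (g.natDegree + f.natDegree) → ℤ))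
        = (fun k : Fin f.natDegree =>
            (Pi.single i 1 : Fin (g.natDegree + f.natDegree) → ℤ) (Fin.natAdd g.natDegree k)) :=
      rfl
    rw [show (((_root_.sylvester f g)ᵀ).col i : Fin (g.natDegree + f.natDegree) → ℤ)
        = fun j => _root_.sylvester f g i j from rfl]
    by_cases hi : (i : ℕ) < g.natDegree
    · rw [sylvester_row_lt f g i hi, e1, e2, funLeft_castAdd_single_lt i hi,
        funLeft_natAdd_single_lt i hi, Pmap_single, map_zero, zero_mul, add_zero, Fin.val_mk]
    · have hi' : g.natDegree ≤ (i : ℕ) := by omega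
      rw [sylvester_row_ge f g i hi', e1, e2, funLeft_castAdd_single_ge i hi',
        funLeft_natAdd_single_ge i hi', Pmap_single, map_zero, zero_mul, zero_add]
  have := LinearMap.congr_fun key u
  exact this

open Matrix in
lemma ker_eq_range (f g : Polynomial ℤ) (hf : f.Monic) (hg : g.Monic) :
    LinearMap.ker (((Ideal.Quotient.mk (Ideal.span {f, g})).toIntAlgHom).toLinearMap ∘ₗ
        Pmap (g.natDegree + f.natDegree))
      = LinearMap.range (Matrix.toLin' (sylvester f g)ᵀ) := by
  apply le_antisymm
  · -- ker ⊆ range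
    intro v hv
    simp only [LinearMap.mem_ker, LinearMap.comp_apply, AlgHom.toLinearMap_apply,
      RingHom.toIntAlgHom_coe] at hv
    rw [Ideal.Quotient.eq_zero_iff_mem, Ideal.mem_span_pair] at hv
    obtain ⟨a, b, hab⟩ := hv
    set a' := a %ₘ g with ha'def
    set b' := b + (a /ₘ g) * f with hb'def
    have key : a' * f + b' * g = Pmap (g.natDegree + f.natDegree) v := by
      have hdiv := modByMonic_add_div a g
      calc a' * f + b' * g = (a' + g * (a /ₘ g)) * f + b * g := by ring
      _ = a * f + b * g := by rw [hdiv]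
      _ = _ := hab
    have hgdeg : g.degree = (g.natDegree : WithBot ℕ) := degree_eq_natDegree hg.ne_zero
    have hfdeg : f.degree = (f.natDegree : WithBot ℕ) := degree_eq_natDegree hf.ne_zero
    have ha' : a'.degree < (g.natDegree : WithBot ℕ) := hgdeg ▸ degree_modByMonic_lt a hg
    have hb' : b'.degree < (f.natDegree : WithBot ℕ) := by
      by_cases hb0 : b' = 0
      · rw [hb0, degree_zero]
        exact WithBot.bot_lt_coe _
      have h1 : (b' * g).degree < ((g.natDegree + f.natDegree : ℕ) : WithBot ℕ) := by
        have hbg : b' * g = Pmap (g.natDegree + f.natDegree) v - a' * f := by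
          rw [← key]; ring
        rw [hbg]
        apply lt_of_le_of_lt (degree_sub_le _ _)
        rw [max_lt_iff]
        refine ⟨Pmap_degree_lt v, ?_⟩
        by_cases ha0 : a' = 0
        · rw [ha0, zero_mul, degree_zero]
          exact WithBot.bot_lt_coe _
        · have h2 : a'.natDegree < g.natDegree :=
            (natDegree_lt_iff_degree_lt ha0).mpr ha'
          rw [← natDegree_lt_iff_degree_lt (mul_ne_zero ha0 hf.ne_zero),
            natDegree_mul ha0 hf.ne_zero]
          omega
      have h3 : (b' * g).natDegree < g.natDegree + f.natDegree :=
        (natDegree_lt_iff_degree_lt (mul_ne_zero hb0 hg.ne_zero)).mpr h1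
      rw [natDegree_mul hb0 hg.ne_zero] at h3
      rw [← natDegree_lt_iff_degree_lt hb0]
      omega
    refine ⟨fun i => if h : (i : ℕ) < g.natDegree
      then a'.coeff (g.natDegree - 1 - (i : ℕ))
      else b'.coeff (f.natDegree - 1 - ((i : ℕ) - g.natDegree)), ?_⟩
    apply Pmap_injective
    rw [Pmap_toLin_sylvester]
    have e1 : (fun i : Fin g.natDegree =>
        (fun i : Fin (g.natDegree + f.natDegree) => if h : (i : ℕ) < g.natDegree
          then a'.coeff (g.natDegree - 1 - (i : ℕ))
          else b'.coeff (f.natDegree - 1 - ((i : ℕ) - g.natDegree))) (Fin.castAdd f.natDegree i))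
        = fun i : Fin g.natDegree => a'.coeff (g.natDegree - 1 - (i : ℕ)) := by
      funext i
      simp only [Fin.coe_castAdd]
      rw [dif_pos i.isLt]
    have e2 : (fun k : Fin f.natDegree =>
        (fun i : Fin (g.natDegree + f.natDegree) => if h : (i : ℕ) < g.natDegree
          then a'.coeff (g.natDegree - 1 - (i : ℕ))
          else b'.coeff (f.natDegree - 1 - ((i : ℕ) - g.natDegree))) (Fin.natAdd g.natDegree k))
        = fun k : Fin f.natDegree => b'.coeff (f.natDegree - 1 - (k : ℕ)) := by
      funext k
      simp only [Fin.coe_natAdd]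
      rw [dif_neg (by omega)]
      congr 1
      omega
    rw [e1, e2, Pmap_eq_self ha', Pmap_eq_self hb', key]
  · -- range ⊆ ker
    rintro _ ⟨u, rfl⟩
    simp only [LinearMap.mem_ker, LinearMap.comp_apply, AlgHom.toLinearMap_apply,
      RingHom.toIntAlgHom_coe]
    rw [Pmap_toLin_sylvester, Ideal.Quotient.eq_zero_iff_mem, Ideal.mem_span_pair]
    exact ⟨_, _, rfl⟩

open Matrix in
lemma surj_phi (f g : Polynomial ℤ) (hf : f.Monic) :
    Function.Surjective (((Ideal.Quotient.mk (Ideal.span {f, g})).toIntAlgHom).toLinearMap ∘ₗ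
        Pmap (g.natDegree + f.natDegree)) := by
  intro y
  obtain ⟨p, rfl⟩ := Ideal.Quotient.mk_surjective y
  refine ⟨fun j => (p %ₘ f).coeff (g.natDegree + f.natDegree - 1 - (j : ℕ)), ?_⟩
  simp only [LinearMap.comp_apply, AlgHom.toLinearMap_apply, RingHom.toIntAlgHom_coe]
  have hdeg : (p %ₘ f).degree < ((g.natDegree + f.natDegree : ℕ) : WithBot ℕ) := by
    apply lt_of_lt_of_le (degree_modByMonic_lt p hf)
    rw [degree_eq_natDegree hf.ne_zero]
    exact_mod_cast Nat.le_add_left _ _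
  rw [Pmap_eq_self hdeg, Ideal.Quotient.mk_eq_mk_iff_sub_mem]
  have : p %ₘ f - p = -(f * (p /ₘ f)) := by
    have := modByMonic_add_div p f
    linear_combination this
  rw [this]
  apply neg_mem
  exact Ideal.mul_mem_right _ _ (Ideal.subset_span (by simp))


theorem toLin'_injective {N : ℕ} (A : Matrix (Fin N) (Fin N) ℤ) (h : A.det ≠ 0) :
    Function.Injective (Matrix.toLin' A) := by
  rw [← LinearMap.ker_eq_bot, eq_bot_iff]
  intro v hv
  simp only [LinearMap.mem_ker, Matrix.toLin'_apply] at hv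
  have h2 := congrArg (fun w => (A.adjugate).mulVec w) hv
  simp only [Matrix.mulVec_mulVec, Matrix.adjugate_mul, Matrix.mulVec_zero,
    Matrix.smul_mulVec, Matrix.one_mulVec] at h2
  ext i
  have := congrFun h2 i
  simp only [Pi.mul_apply, Pi.zero_apply, Pi.smul_apply, smul_eq_mul, mul_eq_zero] at this ⊢
  tauto

theorem snf_index {N : ℕ} {M : Type*} [AddCommGroup M] [Module ℤ M] {R : Submodule ℤ M}
    (snf : Module.Basis.SmithNormalForm R (Fin N) N) :
    R.toAddSubgroup.index = (∏ i, (snf.a i)).natAbs := by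
  have : (∏ i, (snf.a i)).natAbs = ∏ i, (snf.a i).natAbs := map_prod Int.natAbsHom _ Finset.univ
  rw [snf.toAddSubgroup_index_eq_pow_mul_prod, this]
  simp [Ideal.span_singleton_toAddSubgroup_eq_zmultiples, Int.index_zmultiples]

theorem card_coker {N : ℕ} (A : Matrix (Fin N) (Fin N) ℤ) (h : A.det ≠ 0) :
    Nat.card ((Fin N → ℤ) ⧸ LinearMap.range (Matrix.toLin' A)) = A.det.natAbs := by
  classical
  set T := Matrix.toLin' A with hT
  have hinj : Function.Injective T := toLin'_injective A h
  set R := LinearMap.range T with hR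
  have hcard : Nat.card ((Fin N → ℤ) ⧸ R) = R.toAddSubgroup.index :=
    (AddSubgroup.index_eq_card _).symm
  obtain ⟨n, snf⟩ := R.smithNormalForm (Pi.basisFun ℤ (Fin N))
  let e : (Fin N → ℤ) ≃ₗ[ℤ] R := LinearEquiv.ofInjective T hinj
  have hn : n = N := by
    have h1 : Module.finrank ℤ R = n := by
      simpa using Module.finrank_eq_card_basis snf.bN
    have h2 : Module.finrank ℤ (Fin N → ℤ) = Module.finrank ℤ R := e.finrank_eq
    simp only [Module.finrank_pi, Fintype.card_fin] at h2
    omega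
  subst hn
  rw [hcard, snf_index snf]
  -- now: (∏ a i).natAbs = A.det.natAbs
  have hAdet : A.det = LinearMap.det T := by rw [hT, ← LinearMap.det_toLin' A]
  have hTeq : T = R.subtype ∘ₗ e.toLinearMap := by
    ext x
    rfl
  have hdet : (LinearMap.det T).natAbs = (∏ i, (snf.a i)).natAbs := by
    rw [← LinearMap.det_toMatrix snf.bM, hTeq,
      LinearMap.toMatrix_comp snf.bM snf.bN, Matrix.det_mul, Int.natAbs_mul]
    have h1 : (LinearMap.toMatrix snf.bM snf.bN
        (e.toLinearMap)).det.natAbs = 1 := by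
      have hmul : (LinearMap.toMatrix snf.bM snf.bN (e.toLinearMap)) *
          (LinearMap.toMatrix snf.bN snf.bM e.symm.toLinearMap) = 1 := by
        rw [← LinearMap.toMatrix_comp]
        have : (e.toLinearMap ∘ₗ e.symm.toLinearMap)
            = LinearMap.id := by ext x; simp
        rw [this, LinearMap.toMatrix_id]
      have hd := congrArg Matrix.det hmul
      rw [Matrix.det_mul, Matrix.det_one] at hd
      rcases Int.isUnit_iff.mp (IsUnit.of_mul_eq_one _ hd) with h' | h' <;> simp [h']
    rw [h1, mul_one]
    -- inclusion matrix is permuted diagonal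
    have hσ : Function.Bijective snf.f :=
      (Finite.injective_iff_bijective).mp snf.f.injective
    let σ := Equiv.ofBijective snf.f hσ
    have hM : (LinearMap.toMatrix snf.bN snf.bM R.subtype)
        = fun i j => (Matrix.diagonal snf.a) (σ.symm i) j := by
      ext i j
      rw [LinearMap.toMatrix_apply]
      simp only [Submodule.coe_subtype, snf.snf j, map_smul, Module.Basis.repr_self]
      rw [Matrix.diagonal_apply]
      by_cases hij : σ.symm i = j
      · have : snf.f j = i := by
          rw [← hij]; exact σ.apply_symm_apply i
        simp [hij, this, Finsupp.single_eq_same]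
      · have : snf.f j ≠ i := fun hc => hij (by rw [← hc]; exact (σ.symm_apply_apply j))
        simp [hij, Finsupp.single_apply, this]
    rw [hM]
    have hsub : (fun i j => (Matrix.diagonal snf.a) (σ.symm i) j)
        = (Matrix.diagonal snf.a).submatrix σ.symm id := rfl
    rw [hsub, Matrix.det_permute σ.symm (Matrix.diagonal snf.a), Matrix.det_diagonal,
      Int.natAbs_mul]
    rcases Int.units_eq_one_or (Equiv.Perm.sign σ.symm) with h' | h' <;> simp [h']
  rw [hAdet, hdet]

open Matrix in
theorem card_quotient_eq_natAbs_resultant (f g : Polynomial ℤ) (hf : f.Monic) (hg : g.Monic)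
    (hr : _root_.resultant f g ≠ 0) :
    Finite (Polynomial ℤ ⧸ Ideal.span {f, g}) ∧
      Nat.card (Polynomial ℤ ⧸ Ideal.span {f, g}) = (_root_.resultant f g).natAbs := by
  have hdet : ((_root_.sylvester f g)ᵀ).det = _root_.resultant f g := Matrix.det_transpose _
  set φ := ((Ideal.Quotient.mk (Ideal.span {f, g})).toIntAlgHom).toLinearMap ∘ₗ
      Pmap (g.natDegree + f.natDegree) with hφ
  have hsurj := surj_phi f g hf
  have hker := ker_eq_range f g hf hg
  have hc : Nat.card (Polynomial ℤ ⧸ Ideal.span {f, g}) = (_root_.resultant f g).natAbs := by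
    rw [← Nat.card_congr (LinearMap.quotKerEquivOfSurjective φ hsurj).toEquiv,
      Nat.card_congr (Submodule.quotEquivOfEq _ _ hker).toEquiv,
      card_coker _ (by rw [hdet]; exact hr), hdet]
  refine ⟨?_, hc⟩
  have hne : Nat.card (Polynomial ℤ ⧸ Ideal.span {f, g}) ≠ 0 :=
    hc ▸ Int.natAbs_ne_zero.mpr hr
  exact (Nat.card_ne_zero.mp hne).2
end

section
/- For a prime p, β(m)/m tends to p − 1 as m → ∞, where β(m) = min{j : v_p(j!) ≥ m}; consequently B(s)/s² tends to (p−1)/2 as s → ∞. -/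
open Filter Real Finset

/-- `β p m` is the least `j` with `v_p(j!) ≥ m`. -/
noncomputable def beta (p m : ℕ) : ℕ := sInf {j : ℕ | m ≤ padicValNat p (Nat.factorial j)}

/-- `B p s = ∑_{m=1}^s β p m`. -/
noncomputable def bigB (p s : ℕ) : ℕ := ∑ m ∈ Finset.Icc 1 s, beta p m

/-- error term -/
noncomputable def eterm (p m : ℕ) : ℕ := (p - 1) * (Nat.log p ((p - 1) * m) + 2)

lemma witness_mem (p : ℕ) (hp : p.Prime) (m : ℕ) (hm : 1 ≤ m) :
    m ≤ padicValNat p (Nat.factorial ((p - 1) * (m + Nat.log p ((p - 1) * m) + 2))) := by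
  haveI : Fact p.Prime := ⟨hp⟩
  have hp2 : 2 ≤ p := hp.two_le
  set q := p - 1 with hq
  have hq1 : 1 ≤ q := by omega
  set L := Nat.log p (q * m) with hL
  set j := q * (m + L + 2) with hj
  have hjsplit : j = q * m + q * (L + 2) := by rw [hj]; ring
  have h1 : q * m < p ^ (L + 1) := Nat.lt_pow_succ_log_self (by omega) (q * m)
  have h2 : L + 2 ≤ 2 ^ (L + 1) := by
    have := @Nat.lt_two_pow_self (L + 1); omega
  have h4 : q * (L + 2) ≤ q * p ^ (L + 1) :=
    Nat.mul_le_mul_left q (le_trans h2 (Nat.pow_le_pow_left hp2 _))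
  have hjlt : j < p ^ (L + 2) := by
    calc j = q * m + q * (L + 2) := hjsplit
      _ < p ^ (L + 1) + q * p ^ (L + 1) := Nat.add_lt_add_of_lt_of_le h1 h4
      _ ≤ p ^ (L + 1) * p := by
          rw [mul_comm q]
          have : p ^ (L + 1) + p ^ (L + 1) * q = p ^ (L + 1) * (1 + q) := by ring
          rw [this]
          exact Nat.mul_le_mul_left _ (by omega)
      _ = p ^ (L + 2) := (pow_succ p (L + 1)).symm
  have hjne : j ≠ 0 := by positivity
  have hlen : (p.digits j).length = Nat.log p j + 1 := Nat.digits_len p j (by omega) hjne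
  have hlog : Nat.log p j < L + 2 := Nat.log_lt_of_lt_pow hjne hjlt
  have hsum : (p.digits j).sum ≤ (p.digits j).length * q := by
    have := List.sum_le_card_nsmul (p.digits j) q
      (fun d hd => by have := Nat.digits_lt_base (by omega) hd; omega)
    simpa [smul_eq_mul] using this
  have hsum2 : (p.digits j).sum ≤ (L + 2) * q := by
    refine hsum.trans (Nat.mul_le_mul_right q ?_)
    omega
  have hleg : q * padicValNat p (Nat.factorial j) = j - (p.digits j).sum :=
    sub_one_mul_padicValNat_factorial j
  have hkey : q * m ≤ q * padicValNat p (Nat.factorial j) := by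
    rw [hleg]
    have h5 : j - (L + 2) * q ≤ j - (p.digits j).sum := Nat.sub_le_sub_left hsum2 j
    refine le_trans ?_ h5
    have : q * m + (L + 2) * q ≤ j := by rw [hjsplit, mul_comm (L + 2) q]
    omega
  exact Nat.le_of_mul_le_mul_left hkey (by omega)

lemma beta_upper (p : ℕ) (hp : p.Prime) (m : ℕ) (hm : 1 ≤ m) :
    beta p m ≤ (p - 1) * m + eterm p m := by
  have h : beta p m ≤ (p - 1) * (m + Nat.log p ((p - 1) * m) + 2) :=
    Nat.sInf_le (witness_mem p hp m hm)
  refine h.trans (le_of_eq ?_)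
  rw [eterm, show m + Nat.log p ((p - 1) * m) + 2
      = m + (Nat.log p ((p - 1) * m) + 2) from by omega, Nat.mul_add]

lemma beta_lower (p : ℕ) (hp : p.Prime) (m : ℕ) (hm : 1 ≤ m) :
    (p - 1) * m ≤ beta p m := by
  haveI : Fact p.Prime := ⟨hp⟩
  have hne : {j : ℕ | m ≤ padicValNat p (Nat.factorial j)}.Nonempty :=
    ⟨_, witness_mem p hp m hm⟩
  have hmem : m ≤ padicValNat p (Nat.factorial (beta p m)) := Nat.sInf_mem hne
  have hleg : (p - 1) * padicValNat p (Nat.factorial (beta p m))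
      = beta p m - (p.digits (beta p m)).sum := sub_one_mul_padicValNat_factorial _
  calc (p - 1) * m ≤ (p - 1) * padicValNat p (Nat.factorial (beta p m)) :=
        Nat.mul_le_mul_left _ hmem
    _ = beta p m - (p.digits (beta p m)).sum := hleg
    _ ≤ beta p m := Nat.sub_le _ _

lemma eterm_tendsto (p : ℕ) (hp : p.Prime) :
    Tendsto (fun n : ℕ => (eterm p n : ℝ) / n) atTop (nhds 0) := by
  have hp2 : 2 ≤ p := hp.two_le
  have hlogp : (0:ℝ) < Real.log p := Real.log_pos (by exact_mod_cast hp.one_lt)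
  -- real limit of log(p*x)/x
  have hr : Tendsto (fun x : ℝ => Real.log (p * x) / x) atTop (nhds 0) := by
    have h1 : Tendsto (fun x : ℝ => Real.log p / x + Real.log x / x) atTop (nhds 0) := by
      have ha : Tendsto (fun x : ℝ => Real.log p / x) atTop (nhds 0) :=
        tendsto_const_nhds.div_atTop tendsto_id
      have hb : Tendsto (fun x : ℝ => Real.log x / x) atTop (nhds 0) := by
        simpa using Real.tendsto_pow_log_div_mul_add_atTop 1 0 1 one_ne_zero
      simpa using ha.add hb
    refine h1.congr' ?_
    filter_upwards [eventually_gt_atTop (0:ℝ)] with x hx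
    rw [Real.log_mul (by positivity) (ne_of_gt hx), add_div]
  have hrn : Tendsto (fun n : ℕ => Real.log (p * n) / n) atTop (nhds 0) := by
    have := hr.comp tendsto_natCast_atTop_atTop (α := ℕ)
    exact this
  -- upper function
  have hup : Tendsto (fun n : ℕ =>
      ((p:ℝ) - 1) / Real.log p * (Real.log (p * n) / n) + (2 * ((p:ℝ) - 1)) / n)
      atTop (nhds 0) := by
    have := (hrn.const_mul (((p:ℝ) - 1) / Real.log p)).add
      (tendsto_const_div_atTop_nhds_zero_nat (2 * ((p:ℝ) - 1)))
    simpa using this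
  refine tendsto_of_tendsto_of_tendsto_of_le_of_le' tendsto_const_nhds hup ?_ ?_
  · filter_upwards with n; positivity
  · filter_upwards [eventually_ge_atTop 1] with n hn
    have hn0 : (0:ℝ) < n := by exact_mod_cast hn
    have hcast : ((p - 1 : ℕ) : ℝ) = (p:ℝ) - 1 := by
      have : 1 ≤ p := by omega
      push_cast [Nat.cast_sub this]; ring
    have hlog1 : (Nat.log p ((p - 1) * n) : ℝ) ≤ Real.log (p * n) / Real.log p := by
      have h1 : Nat.log p ((p - 1) * n) ≤ Nat.log p (p * n) :=
        Nat.log_mono_right (Nat.mul_le_mul_right n (by omega))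
      have h2 : (Nat.log p (p * n) : ℝ) ≤ Real.logb p ((p : ℝ) * n) := by
        exact_mod_cast Real.natLog_le_logb (p * n) p
      rw [Real.logb] at h2
      calc (Nat.log p ((p - 1) * n) : ℝ) ≤ (Nat.log p (p * n) : ℝ) := by exact_mod_cast h1
        _ ≤ Real.log (p * n) / Real.log p := by
            refine h2.trans (le_of_eq ?_); push_cast; ring_nf
    have hE : (eterm p n : ℝ) ≤ ((p:ℝ) - 1) * (Real.log (p * n) / Real.log p + 2) := by
      rw [eterm]
      push_cast [hcast]
      have hple : (0:ℝ) ≤ (p:ℝ) - 1 := by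
        have : (1:ℝ) ≤ p := by exact_mod_cast hp.one_le
        linarith
      have := mul_le_mul_of_nonneg_left (add_le_add_right hlog1 2) hple
      linarith
    calc (eterm p n : ℝ) / n ≤ (((p:ℝ) - 1) * (Real.log (p * n) / Real.log p + 2)) / n := by
          exact div_le_div_of_nonneg_right hE hn0.le
      _ = ((p:ℝ) - 1) / Real.log p * (Real.log (p * n) / n) + (2 * ((p:ℝ) - 1)) / n := by
          field_simp

theorem beta_asymptotics (p : ℕ) (hp : p.Prime) :
    Filter.Tendsto (fun m : ℕ => (beta p m : ℝ) / m) Filter.atTop (nhds (p - 1)) ∧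
      Filter.Tendsto (fun s : ℕ => (bigB p s : ℝ) / s ^ 2) Filter.atTop
        (nhds ((p - 1) / 2)) := by
  haveI : Fact p.Prime := ⟨hp⟩
  have hp2 : 2 ≤ p := hp.two_le
  have hcast : ((p - 1 : ℕ) : ℝ) = (p:ℝ) - 1 := by
    have : 1 ≤ p := by omega
    push_cast [Nat.cast_sub this]; ring
  have het := eterm_tendsto p hp
  constructor
  · -- part 1
    have hup : Tendsto (fun m : ℕ => ((p:ℝ) - 1) + (eterm p m : ℝ) / m) atTop
        (nhds ((p:ℝ) - 1)) := by
      simpa using tendsto_const_nhds.add het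
    refine tendsto_of_tendsto_of_tendsto_of_le_of_le' tendsto_const_nhds hup ?_ ?_
    · filter_upwards [eventually_ge_atTop 1] with m hm
      have hm0 : (0:ℝ) < m := by exact_mod_cast hm
      rw [le_div_iff₀ hm0]
      have := beta_lower p hp m hm
      calc ((p:ℝ) - 1) * m = ((p - 1 : ℕ) : ℝ) * m := by rw [hcast]
        _ ≤ beta p m := by exact_mod_cast this
    · filter_upwards [eventually_ge_atTop 1] with m hm
      have hm0 : (0:ℝ) < m := by exact_mod_cast hm
      rw [div_le_iff₀ hm0]
      have h := beta_upper p hp m hm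
      have : (beta p m : ℝ) ≤ ((p:ℝ) - 1) * m + (eterm p m : ℝ) := by
        have := (Nat.cast_le (α := ℝ)).2 h
        push_cast [hcast] at this ⊢
        linarith
      calc (beta p m : ℝ) ≤ ((p:ℝ) - 1) * m + (eterm p m : ℝ) := this
        _ = (((p:ℝ) - 1) + (eterm p m : ℝ) / m) * m := by field_simp
  · -- part 2
    set T : ℕ → ℕ := fun s => ∑ m ∈ Finset.Icc 1 s, m with hT
    have hTval : ∀ s : ℕ, (T s : ℝ) * 2 = s * (s + 1) := by
      intro s
      induction s with
      | zero => simp [hT]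
      | succ n ih =>
          simp only [hT] at ih ⊢
          rw [Finset.sum_Icc_succ_top (by omega)]
          push_cast at ih ⊢
          linear_combination ih
    have hBl : ∀ s : ℕ, (p - 1) * T s ≤ bigB p s := by
      intro s
      rw [bigB, hT, Finset.mul_sum]
      refine Finset.sum_le_sum fun m hm => ?_
      exact beta_lower p hp m (Finset.mem_Icc.mp hm).1
    have hBu : ∀ s : ℕ, bigB p s ≤ (p - 1) * T s + s * eterm p s := by
      intro s
      rw [bigB, hT, Finset.mul_sum]
      calc ∑ m ∈ Finset.Icc 1 s, beta p m
          ≤ ∑ m ∈ Finset.Icc 1 s, ((p - 1) * m + eterm p s) := by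
            refine Finset.sum_le_sum fun m hm => ?_
            obtain ⟨h1, h2⟩ := Finset.mem_Icc.mp hm
            refine (beta_upper p hp m h1).trans (add_le_add_right ?_ _)
            rw [eterm, eterm]
            exact Nat.mul_le_mul_left _ (by
              have : Nat.log p ((p-1)*m) ≤ Nat.log p ((p-1)*s) :=
                Nat.log_mono_right (Nat.mul_le_mul_left _ h2)
              omega)
        _ = (∑ m ∈ Finset.Icc 1 s, (p - 1) * m) + s * eterm p s := by
            rw [Finset.sum_add_distrib, Finset.sum_const, Nat.card_Icc]
            simp [smul_eq_mul]
    -- lower real function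
    have hlowt : Tendsto (fun s : ℕ => (((p - 1) * T s : ℕ) : ℝ) / s ^ 2) atTop
        (nhds (((p:ℝ) - 1) / 2)) := by
      have h1 : Tendsto (fun s : ℕ => ((p:ℝ) - 1) / 2 * (1 + 1 / s)) atTop
          (nhds (((p:ℝ) - 1) / 2)) := by
        have := (tendsto_const_nhds : Tendsto (fun _ : ℕ => (1:ℝ)) atTop (nhds 1)).add
          tendsto_one_div_atTop_nhds_zero_nat
        have h2 := this.const_mul (((p:ℝ) - 1) / 2)
        simpa using h2
      refine h1.congr' ?_
      filter_upwards [eventually_ge_atTop 1] with s hs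
      have hs0 : (0:ℝ) < s := by exact_mod_cast hs
      have hv := hTval s
      have hsne : (s:ℝ) ≠ 0 := hs0.ne'
      push_cast [hcast]
      field_simp
      linear_combination (-((p:ℝ) - 1)) * hv
    have hupt : Tendsto (fun s : ℕ => (((p - 1) * T s : ℕ) : ℝ) / s ^ 2 + (eterm p s : ℝ) / s)
        atTop (nhds (((p:ℝ) - 1) / 2)) := by
      simpa using hlowt.add het
    refine tendsto_of_tendsto_of_tendsto_of_le_of_le' hlowt hupt ?_ ?_
    · filter_upwards [eventually_ge_atTop 1] with s hs
      have hs0 : (0:ℝ) < (s:ℝ) ^ 2 := by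
        have : (0:ℝ) < s := by exact_mod_cast hs
        positivity
      exact div_le_div_of_nonneg_right (by exact_mod_cast hBl s) hs0.le
    · filter_upwards [eventually_ge_atTop 1] with s hs
      have hs0 : (0:ℝ) < s := by exact_mod_cast hs
      have h1 : (bigB p s : ℝ) ≤ (((p - 1) * T s : ℕ) : ℝ) + s * (eterm p s : ℝ) := by
        have := (Nat.cast_le (α := ℝ)).2 (hBu s)
        push_cast at this ⊢
        linarith
      have h2 : (bigB p s : ℝ) / s ^ 2 ≤ ((((p - 1) * T s : ℕ) : ℝ) + s * (eterm p s : ℝ)) / s ^ 2 :=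
        div_le_div_of_nonneg_right h1 (by positivity)
      refine h2.trans (le_of_eq ?_)
      field_simp
end

section
/- Let I_{S,s} = {f ∈ ℤ[x] : p^s divides f(n) for all integers n, and p^S divides f(0)}, where S ≥ s ≥ 0. Then I_{S,s} is an ideal of ℤ[x] and the quotient ring R_{S,s} = ℤ[x]/I_{S,s} has cardinality p^{S − s + B(s)}, where B(s) = Σ_{m=1}^{s} min{j : v_p(j!) ≥ m}. -/
open Polynomial
open scoped Nat

/-- The ideal `I_{S,s}` of polynomials all of whose values are divisible by `p^s`
and whose value at `0` is divisible by `p^S`. -/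
noncomputable def IdealDiv (p S s : ℕ) : Ideal (Polynomial ℤ) where
  carrier := {f | (∀ n : ℤ, (p : ℤ) ^ s ∣ f.eval n) ∧ (p : ℤ) ^ S ∣ f.eval 0}
  zero_mem' := ⟨fun n => by simp, by simp⟩
  add_mem' := fun ha hb =>
    ⟨fun n => by simpa using dvd_add (ha.1 n) (hb.1 n), by simpa using dvd_add ha.2 hb.2⟩
  smul_mem' := fun c f hf =>
    ⟨fun n => by simpa [smul_eq_mul] using (hf.1 n).mul_left (c.eval n),
      by simpa [smul_eq_mul] using hf.2.mul_left (c.eval 0)⟩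

namespace CQI

/-- The finite difference operator as a linear map. -/
noncomputable def Δ : Polynomial ℤ →ₗ[ℤ] Polynomial ℤ where
  toFun f := f.comp (X + 1) - f
  map_add' f g := by simp [add_comp]; ring
  map_smul' c f := by simp [smul_comp]; ring

lemma Δ_apply (f : Polynomial ℤ) : Δ f = f.comp (X + 1) - f := rfl

lemma eval_Δ (f : Polynomial ℤ) (n : ℤ) : (Δ f).eval n = f.eval (n + 1) - f.eval n := by
  simp [Δ_apply, eval_comp]

lemma Δ_one : Δ (1 : Polynomial ℤ) = 0 := by simp [Δ_apply]

lemma Δ_desc (j : ℕ) :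
    Δ (descPochhammer ℤ (j + 1)) = ((j : ℤ) + 1) • descPochhammer ℤ j := by
  have h1 : (descPochhammer ℤ (j + 1)).comp (X + 1) = (X + 1) * descPochhammer ℤ j := by
    rw [descPochhammer_succ_left, mul_comp, X_comp, comp_assoc, sub_comp, X_comp, one_comp]
    simp
  rw [Δ_apply, h1]
  rw [descPochhammer_succ_right, smul_eq_C_mul, map_add, map_one, C_eq_natCast]
  ring


/-- The `k`-th finite-difference functional `f ↦ (Δ^k f)(0)`. -/
noncomputable def Dk (k : ℕ) : Polynomial ℤ →ₗ[ℤ] ℤ := (leval 0) ∘ₗ (Δ ^ k)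

lemma Dk_zero_apply (f : Polynomial ℤ) : Dk 0 f = f.eval 0 := by
  simp [Dk, leval_apply]

lemma Dk_succ_apply (k : ℕ) (f : Polynomial ℤ) : Dk (k + 1) f = Dk k (Δ f) := by
  simp [Dk, pow_succ, Module.End.mul_apply]

lemma Dk_desc (k j : ℕ) :
    Dk k (descPochhammer ℤ j) = if j = k then (k ! : ℤ) else 0 := by
  induction k generalizing j with
  | zero =>
    rw [Dk_zero_apply, descPochhammer_eval_zero]
    simp
  | succ k ih =>
    rw [Dk_succ_apply]
    match j with
    | 0 => simp [descPochhammer_zero, Δ_one]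
    | j + 1 =>
      rw [Δ_desc, map_smul, ih, smul_eq_mul]
      by_cases h : j = k
      · subst h
        simp [Nat.factorial_succ]
        try ring
      · have : ¬ (j + 1 = k + 1) := by omega
        simp [h, this]

lemma mem_span_desc (f : Polynomial ℤ) :
    f ∈ Submodule.span ℤ (Set.range (descPochhammer ℤ)) := by
  generalize hd : f.natDegree = d
  induction d using Nat.strong_induction_on generalizing f with
  | _ d ih =>
    by_cases h0 : f = 0
    · simp [h0]
    rcases Nat.eq_zero_or_pos d with hd0 | hdpos
    · subst hd0
      have : f = (f.coeff 0) • descPochhammer ℤ 0 := by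
        rw [descPochhammer_zero, smul_eq_C_mul, mul_one]
        exact Polynomial.eq_C_of_natDegree_eq_zero hd
      rw [this]
      exact Submodule.smul_mem _ _ (Submodule.subset_span ⟨0, rfl⟩)
    · set g := f - (C f.leadingCoeff) * descPochhammer ℤ d with hg
      have hmonic : (descPochhammer ℤ d).Monic := monic_descPochhammer ℤ d
      have hlc : f.leadingCoeff ≠ 0 := leadingCoeff_ne_zero.2 h0
      have hdegq : ((C f.leadingCoeff) * descPochhammer ℤ d).degree = f.degree := by
        rw [degree_C_mul hlc, degree_eq_natDegree hmonic.ne_zero,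
          degree_eq_natDegree h0, descPochhammer_natDegree, hd]
      have hdlt : g.degree < f.degree := by
        apply degree_sub_lt hdegq.symm h0
        rw [leadingCoeff_mul, leadingCoeff_C, hmonic.leadingCoeff, mul_one]
      have : f = g + (f.leadingCoeff) • descPochhammer ℤ d := by
        rw [hg, smul_eq_C_mul]; ring
      rw [this]
      refine Submodule.add_mem _ ?_ (Submodule.smul_mem _ _ (Submodule.subset_span ⟨d, rfl⟩))
      by_cases hg0 : g = 0
      · simp [hg0]
      · exact ih g.natDegree (by have := natDegree_lt_natDegree hg0 hdlt; omega) g rfl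


lemma exists_rep (f : Polynomial ℤ) :
    ∃ c : ℕ →₀ ℤ, (c.sum fun j a => a • descPochhammer ℤ j) = f :=
  (Finsupp.mem_span_range_iff_exists_finsupp).1 (mem_span_desc f)

lemma Dk_rep (k : ℕ) {f : Polynomial ℤ} {c : ℕ →₀ ℤ}
    (h : (c.sum fun j a => a • descPochhammer ℤ j) = f) :
    Dk k f = (k ! : ℤ) * c k := by
  rw [← h, map_finsuppSum]
  have : ∀ j a, Dk k (a • descPochhammer ℤ j) = if j = k then a * (k ! : ℤ) else 0 := by
    intro j a
    rw [map_smul, Dk_desc, smul_eq_mul, mul_ite, mul_zero]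
  have h2 : (c.sum fun a b => (Dk k) (b • descPochhammer ℤ a))
      = c.sum fun j a => if j = k then a * (k ! : ℤ) else 0 :=
    Finsupp.sum_congr fun j _ => this j (c j)
  rw [h2, Finsupp.sum_ite_eq' c k fun _ a => a * (k ! : ℤ)]
  by_cases hk : k ∈ c.support
  · simp [hk, mul_comm]
  · simp [hk, Finsupp.notMem_support_iff.1 hk]

/-- The `k`-th coefficient of `f` in the falling-factorial basis. -/
noncomputable def coeffA (k : ℕ) (f : Polynomial ℤ) : ℤ := Dk k f / (k ! : ℤ)

lemma coeffA_rep (k : ℕ) {f : Polynomial ℤ} {c : ℕ →₀ ℤ}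
    (h : (c.sum fun j a => a • descPochhammer ℤ j) = f) :
    coeffA k f = c k := by
  rw [coeffA, Dk_rep k h, Int.mul_ediv_cancel_left]
  exact_mod_cast (Nat.factorial_ne_zero k)

lemma Dk_eq_fact_mul_coeffA (k : ℕ) (f : Polynomial ℤ) :
    Dk k f = (k ! : ℤ) * coeffA k f := by
  obtain ⟨c, h⟩ := exists_rep f
  rw [Dk_rep k h, coeffA_rep k h]

lemma coeffA_zero_apply (f : Polynomial ℤ) : coeffA 0 f = f.eval 0 := by
  rw [coeffA, Dk_zero_apply]
  simp

lemma coeffA_add (k : ℕ) (f g : Polynomial ℤ) :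
    coeffA k (f + g) = coeffA k f + coeffA k g := by
  have hne : ((k ! : ℤ)) ≠ 0 := by exact_mod_cast (Nat.factorial_ne_zero k)
  apply mul_left_cancel₀ hne
  rw [← Dk_eq_fact_mul_coeffA, map_add, Dk_eq_fact_mul_coeffA k f, Dk_eq_fact_mul_coeffA k g]
  ring


lemma fact_dvd_eval (k : ℕ) (n : ℤ) : (k ! : ℤ) ∣ (descPochhammer ℤ k).eval n := by
  rw [eval_eq_smeval, Ring.descPochhammer_eq_factorial_smul_choose]
  exact ⟨Ring.choose n k, by simp [nsmul_eq_mul]⟩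

lemma dvd_Dk {d : ℤ} (k : ℕ) {f : Polynomial ℤ} (h : ∀ n : ℤ, d ∣ f.eval n) :
    d ∣ Dk k f := by
  induction k generalizing f with
  | zero => rw [Dk_zero_apply]; exact h 0
  | succ k ih =>
    rw [Dk_succ_apply]
    exact ih fun n => by rw [eval_Δ]; exact dvd_sub (h (n + 1)) (h n)

lemma dvd_of_fact_mul {p s k : ℕ} (hp : p.Prime) {c : ℤ}
    (h : (p : ℤ) ^ s ∣ (k ! : ℤ) * c) :
    (p : ℤ) ^ (s - padicValNat p (k !)) ∣ c := by
  haveI := Fact.mk hp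
  by_cases hc : c = 0
  · simp [hc]
  have h1 : (p : ℕ) ^ s ∣ ((k ! : ℤ) * c).natAbs := by
    rw [← Int.natAbs_natCast (p ^ s)]
    exact Int.natAbs_dvd_natAbs.2 (by exact_mod_cast h)
  rw [Int.natAbs_mul, Int.natAbs_natCast] at h1
  have hne : k ! * c.natAbs ≠ 0 := by
    have := Nat.factorial_ne_zero k
    have : c.natAbs ≠ 0 := Int.natAbs_ne_zero.2 hc
    positivity
  have h2 : s ≤ padicValNat p (k ! * c.natAbs) := (padicValNat_dvd_iff_le hne).1 h1
  rw [padicValNat.mul (Nat.factorial_ne_zero k) (Int.natAbs_ne_zero.2 hc)] at h2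
  have h3 : s - padicValNat p (k !) ≤ padicValNat p c.natAbs := by omega
  have h4 : (p : ℕ) ^ (s - padicValNat p (k !)) ∣ c.natAbs :=
    (padicValNat_dvd_iff_le (Int.natAbs_ne_zero.2 hc)).2 h3
  have h5 : ((p ^ (s - padicValNat p (k !)) : ℕ) : ℤ) ∣ c :=
    Int.dvd_natAbs.1 (Int.natCast_dvd_natCast.2 h4)
  exact_mod_cast h5


lemma v_mono {p : ℕ} (hp : p.Prime) : Monotone fun k => padicValNat p (k !) := by
  haveI := Fact.mk hp
  intro a b hab
  exact (padicValNat_dvd_iff_le (Nat.factorial_ne_zero b)).1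
    (pow_padicValNat_dvd.trans (Nat.factorial_dvd_factorial hab))

lemma beta_set_nonempty {p : ℕ} (hp : p.Prime) (m : ℕ) :
    {j : ℕ | m ≤ padicValNat p (Nat.factorial j)}.Nonempty := by
  haveI := Fact.mk hp
  refine ⟨p ^ m, ?_⟩
  show m ≤ padicValNat p ((p ^ m)!)
  rw [padicValNat_factorial (b := m + 1) (by rw [Nat.log_pow hp.one_lt]; omega)]
  calc m = ∑ _i ∈ Finset.Ico 1 (m + 1), 1 := by simp
    _ ≤ _ := by
        refine Finset.sum_le_sum fun i hi => ?_
        rw [Nat.one_le_div_iff (Nat.pow_pos (n := i) hp.pos)]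
        exact Nat.pow_le_pow_right hp.one_lt.le (by simp at hi; omega)

lemma beta_mem {p : ℕ} (hp : p.Prime) (m : ℕ) :
    m ≤ padicValNat p ((beta p m)!) := Nat.sInf_mem (beta_set_nonempty hp m)

lemma lt_beta_iff {p : ℕ} (hp : p.Prime) (m k : ℕ) :
    k < beta p m ↔ padicValNat p (k !) < m := by
  constructor
  · intro h
    by_contra hv
    have h2 : beta p m ≤ k :=
      Nat.sInf_le (show m ≤ padicValNat p (k !) from Nat.le_of_not_lt hv)
    omega
  · intro h
    by_contra hk
    have h2 : padicValNat p ((beta p m)!) ≤ padicValNat p (k !) :=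
      v_mono hp (Nat.le_of_not_lt hk)
    have h3 := beta_mem hp m
    omega

lemma beta_mono {p : ℕ} (hp : p.Prime) {m m' : ℕ} (h : m ≤ m') :
    beta p m ≤ beta p m' :=
  Nat.sInf_le (le_trans h (beta_mem hp m'))

lemma beta_pos {p : ℕ} (hp : p.Prime) {m : ℕ} (hm : 1 ≤ m) : 0 < beta p m := by
  rw [lt_beta_iff hp]
  simp; omega


/-- The exponent associated to the `k`-th coefficient. -/
def Ek (p S s k : ℕ) : ℕ := if k = 0 then S else s - padicValNat p (k !)

lemma mem_iff {p S s : ℕ} (hp : p.Prime) (hSs : s ≤ S) (f : Polynomial ℤ) :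
    f ∈ IdealDiv p S s ↔ ∀ k : ℕ, (p : ℤ) ^ Ek p S s k ∣ coeffA k f := by
  constructor
  · rintro ⟨h1, h2⟩ k
    match k with
    | 0 => rw [coeffA_zero_apply]; simpa [Ek] using h2
    | k + 1 =>
      show (p : ℤ) ^ (s - padicValNat p ((k+1)!)) ∣ coeffA (k+1) f
      exact dvd_of_fact_mul hp (by rw [← Dk_eq_fact_mul_coeffA]; exact dvd_Dk _ h1)
  · intro h
    have h0 : (p : ℤ) ^ S ∣ f.eval 0 := by
      rw [← coeffA_zero_apply]; simpa [Ek] using h 0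
    refine ⟨fun n => ?_, h0⟩
    obtain ⟨c, hc⟩ := exists_rep f
    rw [← hc, ← leval_apply, map_finsuppSum]
    apply Finset.dvd_sum
    intro j _
    have hcj : c j = coeffA j f := (coeffA_rep j hc).symm
    show (p : ℤ) ^ s ∣ (leval n) (c j • descPochhammer ℤ j)
    rw [leval_apply, eval_smul, smul_eq_mul, hcj]
    match j with
    | 0 =>
      apply dvd_mul_of_dvd_left
      exact (pow_dvd_pow (p : ℤ) hSs).trans (by simpa [Ek] using h 0)
    | j + 1 =>
      set v := padicValNat p ((j + 1)!) with hv
      have h1 : (p : ℤ) ^ (s - v) ∣ coeffA (j+1) f := by simpa [Ek] using h (j+1)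
      have h2 : (p : ℤ) ^ (min s v) ∣ (descPochhammer ℤ (j+1)).eval n := by
        refine (pow_dvd_pow (p : ℤ) (min_le_right s v)).trans ?_
        refine dvd_trans ?_ (fact_dvd_eval (j+1) n)
        exact_mod_cast Int.natCast_dvd_natCast.2 (pow_padicValNat_dvd)
      have : (p : ℤ) ^ s = (p : ℤ) ^ (s - v) * (p : ℤ) ^ (min s v) := by
        rw [← pow_add]; congr 1; omega
      rw [this]
      exact mul_dvd_mul h1 h2

lemma Ek_eq_zero {p S s k : ℕ} (hp : p.Prime) (hk : beta p s + 1 ≤ k) :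
    Ek p S s k = 0 := by
  have h1 : ¬ (k < beta p s) := by omega
  rw [lt_beta_iff hp] at h1
  have hk0 : k ≠ 0 := by omega
  rw [Ek, if_neg hk0]
  omega

lemma sum_Ek {p S s : ℕ} (hp : p.Prime) (hSs : s ≤ S) :
    ∑ k ∈ Finset.range (beta p s + 1), Ek p S s k = S - s + bigB p s := by
  have hsplit : Finset.range (beta p s + 1) = insert 0 (Finset.Ico 1 (beta p s + 1)) := by
    ext x; simp [Finset.mem_range, Finset.mem_Ico]; omega
  rw [hsplit, Finset.sum_insert (by simp)]
  have hE0 : Ek p S s 0 = S := by simp [Ek]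
  have hterm : ∀ k ∈ Finset.Ico 1 (beta p s + 1),
      Ek p S s k = ∑ m ∈ Finset.Icc 1 s, if padicValNat p (k !) < m then 1 else 0 := by
    intro k hk
    simp only [Finset.mem_Ico] at hk
    have hk0 : k ≠ 0 := by omega
    have hfilter : (Finset.Icc 1 s).filter (fun m => padicValNat p (k !) < m)
        = Finset.Icc (padicValNat p (k !) + 1) s := by
      ext m; simp only [Finset.mem_filter, Finset.mem_Icc]; omega
    have hsum : (∑ m ∈ Finset.Icc 1 s, if padicValNat p (k !) < m then 1 else 0)
        = ((Finset.Icc 1 s).filter fun m => padicValNat p (k !) < m).card := by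
      simp [Finset.sum_boole]
    rw [hsum, hfilter, Nat.card_Icc, Ek, if_neg hk0]
    omega
  rw [Finset.sum_congr rfl hterm, Finset.sum_comm]
  have hinner : ∀ m ∈ Finset.Icc 1 s,
      (∑ k ∈ Finset.Ico 1 (beta p s + 1), if padicValNat p (k !) < m then 1 else 0)
        = beta p m - 1 := by
    intro m hm
    simp only [Finset.mem_Icc] at hm
    have hmono := beta_mono hp hm.2
    have hfilter : (Finset.Ico 1 (beta p s + 1)).filter (fun k => padicValNat p (k !) < m)
        = Finset.Ico 1 (beta p m) := by
      ext k
      simp only [Finset.mem_filter, Finset.mem_Ico, ← lt_beta_iff hp m k]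
      omega
    have hsum : (∑ k ∈ Finset.Ico 1 (beta p s + 1), if padicValNat p (k !) < m then 1 else 0)
        = ((Finset.Ico 1 (beta p s + 1)).filter fun k => padicValNat p (k !) < m).card := by
      simp [Finset.sum_boole]
    rw [hsum, hfilter, Nat.card_Ico]
  rw [Finset.sum_congr rfl hinner]
  have hbeta1 : ∀ m ∈ Finset.Icc 1 s, 1 ≤ beta p m :=
    fun m hm => beta_pos hp (Finset.mem_Icc.1 hm).1
  have hsum2 : (∑ m ∈ Finset.Icc 1 s, (beta p m - 1)) + s = bigB p s := by
    rw [bigB]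
    calc (∑ m ∈ Finset.Icc 1 s, (beta p m - 1)) + s
        = ∑ m ∈ Finset.Icc 1 s, (beta p m - 1 + 1) := by
          rw [Finset.sum_add_distrib, Finset.sum_const, Nat.card_Icc]
          simp
      _ = ∑ m ∈ Finset.Icc 1 s, beta p m :=
          Finset.sum_congr rfl fun m hm => by have := hbeta1 m hm; omega
  rw [hE0]
  omega
  

theorem card_quotient' (p S s : ℕ) (hp : p.Prime) (hSs : s ≤ S) :
    Nat.card (Polynomial ℤ ⧸ IdealDiv p S s) = p ^ (S - s + bigB p s) := by
  classical
  set K := beta p s + 1 with hK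
  let T : Polynomial ℤ →+ ((k : Fin K) → ZMod (p ^ Ek p S s k)) :=
    { toFun := fun f k => ((coeffA k f : ℤ) : ZMod (p ^ Ek p S s (k : ℕ))),
      map_zero' := by
        funext k
        simp [coeffA]
      map_add' := fun f g => by
        funext k
        simp [coeffA_add] }
  have hT : ∀ f k, T f k = ((coeffA (k : ℕ) f : ℤ) : ZMod (p ^ Ek p S s (k : ℕ))) :=
    fun f k => rfl
  have hsurj : Function.Surjective T := by
    intro t
    choose z hz using fun k : Fin K => ZMod.intCast_surjective (t k)
    refine ⟨∑ k : Fin K, (z k) • descPochhammer ℤ (k : ℕ), ?_⟩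
    funext j
    rw [hT]
    have hD : Dk (j : ℕ) (∑ k : Fin K, (z k) • descPochhammer ℤ (k : ℕ))
        = ((j : ℕ)! : ℤ) * z j := by
      rw [map_sum]
      have : ∀ k : Fin K, Dk (j : ℕ) ((z k) • descPochhammer ℤ (k : ℕ))
          = if k = j then z k * ((j : ℕ)! : ℤ) else 0 := by
        intro k
        rw [map_smul, Dk_desc, smul_eq_mul, mul_ite, mul_zero]
        congr 1
        simp [Fin.val_eq_val]
      rw [Finset.sum_congr rfl fun k _ => this k, Finset.sum_ite_eq' Finset.univ j
        fun k => z k * ((j : ℕ)! : ℤ)]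
      simp [mul_comm]
    have hcA : coeffA (j : ℕ) (∑ k : Fin K, (z k) • descPochhammer ℤ (k : ℕ)) = z j := by
      rw [coeffA, hD, Int.mul_ediv_cancel_left]
      exact_mod_cast Nat.factorial_ne_zero (j : ℕ)
    rw [hcA, hz]
  have hker : T.ker = (IdealDiv p S s).toAddSubgroup := by
    ext f
    rw [AddMonoidHom.mem_ker]
    have hmem : f ∈ (IdealDiv p S s).toAddSubgroup ↔ f ∈ IdealDiv p S s := Iff.rfl
    rw [hmem, mem_iff hp hSs, funext_iff]
    constructor
    · intro h k
      by_cases hkK : k < K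
      · have := h ⟨k, hkK⟩
        rw [hT, Pi.zero_apply, ZMod.intCast_zmod_eq_zero_iff_dvd] at this
        exact_mod_cast this
      · rw [Ek_eq_zero hp (by omega)]
        simp
    · intro h j
      rw [hT, Pi.zero_apply, ZMod.intCast_zmod_eq_zero_iff_dvd]
      exact_mod_cast h (j : ℕ)
  have e1 : (Polynomial ℤ ⧸ (IdealDiv p S s).toAddSubgroup) ≃+
      ((k : Fin K) → ZMod (p ^ Ek p S s k)) := by
    rw [← hker]
    exact QuotientAddGroup.quotientKerEquivOfSurjective T hsurj
  have e0 : Nat.card (Polynomial ℤ ⧸ IdealDiv p S s)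
      = Nat.card (Polynomial ℤ ⧸ (IdealDiv p S s).toAddSubgroup) := rfl
  rw [e0, Nat.card_congr e1.toEquiv, Nat.card_pi]
  simp only [Nat.card_zmod]
  rw [Finset.prod_pow_eq_pow_sum]
  congr 1
  rw [Fin.sum_univ_eq_sum_range]
  exact sum_Ek hp hSs

end CQI


theorem card_quotient_IdealDiv (p S s : ℕ) (hp : p.Prime) (hSs : s ≤ S) :
    Nat.card (Polynomial ℤ ⧸ IdealDiv p S s) = p ^ (S - s + bigB p s) :=
  CQI.card_quotient' p S s hp hSs
end

section
/- The ring of all polynomial functions from ℤ/p^sℤ to ℤ/p^sℤ has cardinality p^{B(s)}, where B(s) = Σ_{m=1}^{s} min{j : v_p(j!) ≥ m}. -/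
open Polynomial

private lemma desc_span (f : Polynomial ℤ) :
    f ∈ Submodule.span ℤ (Set.range (descPochhammer ℤ)) := by
  suffices h : ∀ n (f : Polynomial ℤ), f.natDegree < n →
      f ∈ Submodule.span ℤ (Set.range (descPochhammer ℤ)) from
    h (f.natDegree + 1) f (Nat.lt_succ_self _)
  intro n
  induction n with
  | zero => intro f hf; omega
  | succ n ih =>
    intro f hf
    by_cases h0 : f = 0
    · simp [h0]
    set d := f.natDegree with hd
    set g := f - Polynomial.C (f.coeff d) * descPochhammer ℤ d with hg
    have hdesc : (descPochhammer ℤ d).natDegree = d := descPochhammer_natDegree ℤ d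
    have hgd : g.natDegree ≤ d := by
      apply le_trans (Polynomial.natDegree_sub_le _ _)
      apply max_le (le_refl d)
      exact le_trans (Polynomial.natDegree_C_mul_le _ _) (le_of_eq hdesc)
    have hcd : (descPochhammer ℤ d).coeff d = 1 := by
      have := (monic_descPochhammer ℤ d).coeff_natDegree
      rwa [hdesc] at this
    have hgc : g.coeff d = 0 := by
      simp [hg, Polynomial.coeff_C_mul, hcd]
    have hmem : g ∈ Submodule.span ℤ (Set.range (descPochhammer ℤ)) := by
      by_cases hg0 : g = 0
      · simp [hg0]
      · apply ih
        have hne : g.natDegree ≠ d := by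
          intro h
          apply hg0
          apply Polynomial.leadingCoeff_eq_zero.mp
          rw [Polynomial.leadingCoeff, h, hgc]
        omega
    have : f = g + Polynomial.C (f.coeff d) * descPochhammer ℤ d := by ring
    rw [this]
    refine Submodule.add_mem _ hmem ?_
    rw [← smul_eq_C_mul]
    exact Submodule.smul_mem _ _ (Submodule.subset_span ⟨d, rfl⟩)

lemma padic_fact_mono (p : ℕ) (hp : p.Prime) {j k : ℕ} (h : j ≤ k) :
    padicValNat p j.factorial ≤ padicValNat p k.factorial := by
  haveI : Fact p.Prime := ⟨hp⟩
  rw [← padicValNat_dvd_iff_le (Nat.factorial_ne_zero k)]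
  exact dvd_trans pow_padicValNat_dvd (Nat.factorial_dvd_factorial h)

lemma beta_mem (p : ℕ) (hp : p.Prime) (m : ℕ) :
    m ≤ padicValNat p (beta p m).factorial := by
  haveI : Fact p.Prime := ⟨hp⟩
  have hmem : p ^ m ∈ {j : ℕ | m ≤ padicValNat p (Nat.factorial j)} := by
    rw [Set.mem_setOf_eq, ← padicValNat_dvd_iff_le (Nat.factorial_ne_zero _)]
    exact Nat.dvd_factorial (pow_pos hp.pos m) le_rfl
  exact Nat.sInf_mem ⟨_, hmem⟩

lemma le_padic_of_beta_le (p : ℕ) (hp : p.Prime) {m k : ℕ} (h : beta p m ≤ k) :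
    m ≤ padicValNat p k.factorial :=
  le_trans (beta_mem p hp m) (padic_fact_mono p hp h)

lemma padic_lt_of_lt_beta (p : ℕ) {m k : ℕ} (h : k < beta p m) :
    padicValNat p k.factorial < m := by
  by_contra hc
  have hmem : k ∈ {j : ℕ | m ≤ padicValNat p (Nat.factorial j)} := le_of_not_gt hc
  have := Nat.sInf_le hmem
  rw [← beta] at this
  omega

lemma beta_mono (p : ℕ) (hp : p.Prime) {m m' : ℕ} (h : m ≤ m') : beta p m ≤ beta p m' :=
  Nat.sInf_le (le_trans h (beta_mem p hp m'))

-- annihilator cardinality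
lemma ann_card (n a : ℕ) (hn : n ≠ 0) :
    Nat.card {x : ZMod n // (a : ZMod n) * x = 0} = n.gcd a := by
  haveI : NeZero n := ⟨hn⟩
  set μ : ZMod n →+ ZMod n := AddMonoidHom.mulLeft (a : ZMod n) with hμ
  have hker : ∀ x : ZMod n, x ∈ μ.ker ↔ (a : ZMod n) * x = 0 := by
    intro x; rfl
  have hrange : μ.range = AddSubgroup.zmultiples ((a : ZMod n)) := by
    ext y
    constructor
    · rintro ⟨x, rfl⟩
      obtain ⟨m, rfl⟩ := ZMod.natCast_rightInverse.surjective x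
      refine ⟨(m : ℤ), ?_⟩
      simp only [hμ, AddMonoidHom.mulLeft, AddMonoidHom.coe_mk, ZeroHom.coe_mk]
      push_cast [zsmul_eq_mul]
      ring
    · rintro ⟨z, rfl⟩
      refine ⟨(z : ZMod n), ?_⟩
      simp only [hμ, AddMonoidHom.mulLeft, AddMonoidHom.coe_mk, ZeroHom.coe_mk]
      push_cast [zsmul_eq_mul]
      ring
  have hq := AddSubgroup.card_eq_card_quotient_mul_card_addSubgroup (μ.ker)
  rw [Nat.card_congr (QuotientAddGroup.quotientKerEquivRange μ).toEquiv] at hq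
  have hr : Nat.card μ.range = n / n.gcd a := by
    rw [hrange, Nat.card_zmultiples, ZMod.addOrderOf_coe a hn]
  rw [Nat.card_zmod, hr] at hq
  have hg : n.gcd a ∣ n := Nat.gcd_dvd_left n a
  have hpos : 0 < n / n.gcd a :=
    Nat.div_pos (Nat.le_of_dvd (Nat.pos_of_ne_zero hn) hg) (Nat.pos_of_ne_zero
      (Nat.gcd_ne_zero_left hn))
  have : Nat.card μ.ker = n.gcd a := by
    have h2 : n.gcd a * (n / n.gcd a) = n := Nat.mul_div_cancel' hg
    have := hq.symm.trans h2.symm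
    -- n / gcd * card ker = gcd * (n / gcd)
    rw [mul_comm (n / n.gcd a)] at this
    exact Nat.eq_of_mul_eq_mul_right hpos this
  rw [← this]
  rfl

lemma bigB_eq (p s : ℕ) (hp : p.Prime) :
    bigB p s = ∑ k ∈ Finset.range (beta p s), (s - padicValNat p k.factorial) := by
  have hfilter : ∀ m ∈ Finset.Icc 1 s,
      beta p m = ((Finset.range (beta p s)).filter
        (fun k => padicValNat p k.factorial < m)).card := by
    intro m hm
    rw [Finset.mem_Icc] at hm
    have h1 : (Finset.range (beta p s)).filter (fun k => padicValNat p k.factorial < m)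
        = Finset.range (beta p m) := by
      ext k
      simp only [Finset.mem_filter, Finset.mem_range]
      constructor
      · rintro ⟨-, hk⟩
        by_contra hc
        exact absurd (le_padic_of_beta_le p hp (le_of_not_gt hc)) (not_le_of_gt hk)
      · intro hk
        exact ⟨lt_of_lt_of_le hk (beta_mono p hp hm.2), padic_lt_of_lt_beta p hk⟩
    rw [h1, Finset.card_range]
  rw [bigB, Finset.sum_congr rfl hfilter]
  simp only [Finset.card_filter]
  rw [Finset.sum_comm]
  apply Finset.sum_congr rfl
  intro k hk
  rw [Finset.mem_range] at hk
  have hv : padicValNat p k.factorial < s := padic_lt_of_lt_beta p hk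
  rw [← Finset.card_filter]
  have : (Finset.Icc 1 s).filter (fun m => padicValNat p k.factorial < m)
      = Finset.Icc (padicValNat p k.factorial + 1) s := by
    ext m
    simp only [Finset.mem_filter, Finset.mem_Icc]
    omega
  rw [this, Nat.card_Icc]
  omega

lemma gcd_pow_factorial (p s k : ℕ) (hp : p.Prime) (hvs : padicValNat p k.factorial ≤ s) :
    Nat.gcd (p ^ s) k.factorial = p ^ padicValNat p k.factorial := by
  haveI : Fact p.Prime := ⟨hp⟩
  apply Nat.dvd_antisymm
  · obtain ⟨t, ht, hte⟩ := (Nat.dvd_prime_pow hp).mp (Nat.gcd_dvd_left (p ^ s) k.factorial)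
    have h2 : p ^ t ∣ k.factorial := hte ▸ Nat.gcd_dvd_right (p ^ s) k.factorial
    have h3 : t ≤ padicValNat p k.factorial :=
      (padicValNat_dvd_iff_le (Nat.factorial_ne_zero k)).mp h2
    rw [hte]
    exact pow_dvd_pow p h3
  · exact Nat.dvd_gcd (pow_dvd_pow p hvs) pow_padicValNat_dvd


theorem card_polynomialFunctions_zmod (p s : ℕ) (hp : p.Prime) (hs : 1 ≤ s) :
    Nat.card {F : ZMod (p ^ s) → ZMod (p ^ s) //
        ∃ f : Polynomial ℤ, ∀ x : ZMod (p ^ s), F x = Polynomial.aeval x f} =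
      p ^ bigB p s := by
  haveI : Fact p.Prime := ⟨hp⟩
  haveI : NeZero (p ^ s) := ⟨pow_ne_zero s hp.pos.ne'⟩
  set n := p ^ s with hn
  set N := beta p s with hN
  set v : ℕ → ℕ := fun k => padicValNat p k.factorial with hv
  -- the descending factorial functions
  set D : ℕ → ZMod n → ZMod n := fun k x => Polynomial.aeval x (descPochhammer ℤ k) with hD
  have hDnat : ∀ (k m : ℕ), D k ((m : ZMod n)) = ((m.descFactorial k : ℕ) : ZMod n) := by
    intro k m
    have h1 : ((m : ZMod n)) = algebraMap ℤ (ZMod n) (m : ℤ) := by push_cast; simp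
    rw [hD]
    simp only [h1, aeval_algebraMap_apply_eq_algebraMap_eval]
    rw [descPochhammer_eval_eq_descFactorial]
    push_cast
    simp
  have hDzero : ∀ k, N ≤ k → D k = 0 := by
    intro k hk
    funext x
    obtain ⟨m, rfl⟩ := ZMod.natCast_rightInverse.surjective x
    rw [hDnat]
    have hdvd : n ∣ m.descFactorial k := by
      refine dvd_trans ?_ (Nat.factorial_dvd_descFactorial m k)
      rw [hn]
      exact (padicValNat_dvd_iff_le (Nat.factorial_ne_zero k)).mpr
        (le_padic_of_beta_le p hp hk)
    simpa [Pi.zero_apply] using (ZMod.natCast_eq_zero_iff _ n).mpr hdvd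
  -- the linear parametrization
  set Ψ : (Fin N → ZMod n) → (ZMod n → ZMod n) :=
    fun c x => ∑ k : Fin N, c k * D k x with hΨ
  have claimA : Set.range Ψ
      = {F : ZMod n → ZMod n | ∃ f : Polynomial ℤ, ∀ x : ZMod n, F x = Polynomial.aeval x f} := by
    ext F
    constructor
    · rintro ⟨c, rfl⟩
      refine ⟨∑ k : Fin N, Polynomial.C (((c k).val : ℤ)) * descPochhammer ℤ (k : ℕ), ?_⟩
      intro x
      rw [map_sum]
      show ∑ k : Fin N, c k * D (k : ℕ) x = _
      apply Finset.sum_congr rfl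
      intro k _
      rw [map_mul, aeval_C]
      congr 1
      rw [algebraMap_int_eq, eq_intCast, Int.cast_natCast]
      exact (ZMod.natCast_rightInverse (c k)).symm
    · rintro ⟨f, hF⟩
      obtain ⟨c, hc⟩ := Finsupp.mem_span_range_iff_exists_finsupp.mp (desc_span f)
      refine ⟨fun k => ((c (k : ℕ) : ℤ) : ZMod n), ?_⟩
      funext x
      have hval : Polynomial.aeval x f = ∑ i ∈ c.support, ((c i : ℤ) : ZMod n) * D i x := by
        rw [← hc, Finsupp.sum, map_sum]
        apply Finset.sum_congr rfl
        intro i _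
        rw [map_zsmul, zsmul_eq_mul]
      have hstep1 : ∑ i ∈ c.support, ((c i : ℤ) : ZMod n) * D i x
          = ∑ i ∈ c.support ∪ Finset.range N, ((c i : ℤ) : ZMod n) * D i x := by
        apply Finset.sum_subset Finset.subset_union_left
        intro i _ hi
        rw [Finsupp.notMem_support_iff.mp hi]
        simp
      have hstep2 : ∑ i ∈ Finset.range N, ((c i : ℤ) : ZMod n) * D i x
          = ∑ i ∈ c.support ∪ Finset.range N, ((c i : ℤ) : ZMod n) * D i x := by
        apply Finset.sum_subset Finset.subset_union_right
        intro i _ hi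
        rw [Finset.mem_range, not_lt] at hi
        rw [hDzero i hi]
        simp
      rw [hF x, hval, hstep1, ← hstep2]
      show ∑ k : Fin N, ((c (k : ℕ) : ℤ) : ZMod n) * D (k : ℕ) x = _
      exact Fin.sum_univ_eq_sum_range (fun i => ((c i : ℤ) : ZMod n) * D i x) N
  have claimB : ∀ c : Fin N → ZMod n,
      Ψ c = 0 ↔ ∀ k : Fin N, ((Nat.factorial k : ℕ) : ZMod n) * c k = 0 := by
    intro c
    constructor
    · intro h0
      suffices hind : ∀ j : ℕ, ∀ hj : j < N,
          ((Nat.factorial j : ℕ) : ZMod n) * c ⟨j, hj⟩ = 0 by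
        intro k
        have := hind (k : ℕ) k.isLt
        simpa using this
      intro j
      induction j using Nat.strong_induction_on with
      | _ j ih =>
        intro hj
        have hev : ∑ k : Fin N, c k * D (k : ℕ) ((j : ZMod n)) = 0 := congrFun h0 ((j : ZMod n))
        have hsingle : ∑ k : Fin N, c k * D (k : ℕ) ((j : ZMod n))
            = c ⟨j, hj⟩ * D j ((j : ZMod n)) := by
          apply Finset.sum_eq_single
          · intro k _ hk
            have hkj : (k : ℕ) ≠ j := fun h => hk (Fin.ext h)
            rcases lt_or_gt_of_ne hkj with hlt | hgt
            · rw [hDnat, Nat.descFactorial_eq_factorial_mul_choose]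
              push_cast
              have hih := ih (k : ℕ) hlt k.isLt
              have : c k * (((k : ℕ).factorial : ZMod n) * ((j.choose (k : ℕ) : ℕ) : ZMod n))
                  = ((j.choose (k : ℕ) : ℕ) : ZMod n)
                    * (((k : ℕ).factorial : ZMod n) * c k) := by ring
              rw [this]
              simp only [Fin.eta] at hih ⊢
              rw [hih, mul_zero]
            · rw [hDnat, Nat.descFactorial_eq_zero_iff_lt.mpr hgt]
              simp
          · intro h
            exact absurd (Finset.mem_univ _) h
        rw [hsingle, hDnat, Nat.descFactorial_self, mul_comm] at hev
        exact hev
    · intro h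
      funext x
      obtain ⟨m, rfl⟩ := ZMod.natCast_rightInverse.surjective x
      show ∑ k : Fin N, c k * D (k : ℕ) ((m : ZMod n)) = 0
      apply Finset.sum_eq_zero
      intro k _
      rw [hDnat, Nat.descFactorial_eq_factorial_mul_choose]
      push_cast
      have : c k * (((k : ℕ).factorial : ZMod n) * ((m.choose (k : ℕ) : ℕ) : ZMod n))
          = ((m.choose (k : ℕ) : ℕ) : ZMod n) * (((k : ℕ).factorial : ZMod n) * c k) := by ring
      rw [this, h k, mul_zero]
  -- package Ψ as an additive hom
  set ψ : (Fin N → ZMod n) →+ (ZMod n → ZMod n) := AddMonoidHom.mk' Ψ (by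
    intro a b
    funext x
    show ∑ k : Fin N, (a k + b k) * D (k : ℕ) x = _
    rw [Finset.sum_congr rfl (fun k _ => add_mul (a k) (b k) (D (k : ℕ) x)),
      Finset.sum_add_distrib]
    rfl) with hψ
  have hψcoe : ⇑ψ = Ψ := rfl
  -- identify the subtype with the range of ψ
  have hconv : Nat.card {F : ZMod n → ZMod n //
      ∃ f : Polynomial ℤ, ∀ x : ZMod n, F x = Polynomial.aeval x f} = Nat.card ψ.range := by
    apply Nat.card_congr
    apply Equiv.subtypeEquivRight
    intro F
    rw [AddMonoidHom.mem_range]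
    constructor
    · intro hF
      have : F ∈ Set.range Ψ := claimA ▸ hF
      obtain ⟨c, hcc⟩ := this
      exact ⟨c, hcc⟩
    · rintro ⟨c, rfl⟩
      have : Ψ c ∈ Set.range Ψ := ⟨c, rfl⟩
      rw [claimA] at this
      exact this
  -- cardinality of the kernel
  have hker : Nat.card ψ.ker = p ^ (∑ k ∈ Finset.range N, v k) := by
    have e1 : ψ.ker ≃ ∀ k : Fin N, {x : ZMod n // (((k : ℕ).factorial : ℕ) : ZMod n) * x = 0} := by
      refine Equiv.trans ?_ (Equiv.subtypePiEquivPi)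
      apply Equiv.subtypeEquivRight
      intro c
      rw [AddMonoidHom.mem_ker]
      exact claimB c
    rw [Nat.card_congr e1, Nat.card_pi]
    have hann : ∀ k : Fin N,
        Nat.card {x : ZMod n // (((k : ℕ).factorial : ℕ) : ZMod n) * x = 0} = p ^ v (k : ℕ) := by
      intro k
      rw [ann_card n _ (NeZero.ne n), hn]
      exact gcd_pow_factorial p s (k : ℕ) hp (le_of_lt (padic_lt_of_lt_beta p k.isLt))
    rw [Finset.prod_congr rfl (fun k _ => hann k), Finset.prod_pow_eq_pow_sum]
    congr 1
    exact Fin.sum_univ_eq_sum_range v N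
  -- cardinality of the domain
  have hdom : Nat.card (Fin N → ZMod n) = p ^ (s * N) := by
    rw [Nat.card_fun, Nat.card_zmod, Nat.card_eq_fintype_card, Fintype.card_fin, hn, ← pow_mul]
  -- first isomorphism theorem
  have hcount := AddSubgroup.card_eq_card_quotient_mul_card_addSubgroup ψ.ker
  rw [Nat.card_congr (QuotientAddGroup.quotientKerEquivRange ψ).toEquiv, hdom, hker] at hcount
  -- exponent arithmetic
  have hexp : bigB p s + ∑ k ∈ Finset.range N, v k = s * N := by
    rw [bigB_eq p s hp, ← Finset.sum_add_distrib]
    have hterm : ∀ k ∈ Finset.range N, (s - v k) + v k = s := by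
      intro k hk
      have hvk : v k < s := padic_lt_of_lt_beta p (Finset.mem_range.mp hk)
      exact Nat.sub_add_cancel (le_of_lt hvk)
    rw [Finset.sum_congr rfl hterm, Finset.sum_const, Finset.card_range, smul_eq_mul, mul_comm]
  rw [hconv]
  have hpos : 0 < p ^ (∑ k ∈ Finset.range N, v k) := pow_pos hp.pos _
  apply Nat.eq_of_mul_eq_mul_right hpos
  rw [← hcount, ← pow_add, hexp]
end

section
/- If p^s divides f(n) and g(n) for all n with s ≥ 1 and the resultant r of the monic polynomials f, g ∈ ℤ[x] is nonzero, then v_p(r) ≥ p. -/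
open Polynomial

open Finset

section helpers

lemma det_dvd_of_rows (p M N : ℕ) (hMN : M + p ≤ N)
    (b : Fin M → (Fin N → ℤ)) (c : Fin N → Fin M → ℤ) (e : Fin N → (Fin N → ℤ))
    (r : Fin N → (Fin N → ℤ))
    (hr : ∀ i, r i = (∑ k, c i k • b k) + (p : ℤ) • e i) :
    (p : ℤ) ^ p ∣ (Matrix.of r).det := by
  classical
  set gg : Fin N → Option (Fin M) → (Fin N → ℤ) := fun i o =>
    Option.elim o ((p : ℤ) • e i) (fun k => c i k • b k) with hgg
  have hrow : ∀ i, r i = ∑ o : Option (Fin M), gg i o := by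
    intro i
    rw [Fintype.sum_option, hr i, add_comm]
    rfl
  have hM : (Matrix.of r : Matrix (Fin N) (Fin N) ℤ)
      = Matrix.of (fun i => ∑ o : Option (Fin M), gg i o) := by
    ext i j
    rw [show (Matrix.of r : Matrix (Fin N) (Fin N) ℤ) i j = r i j from rfl, hrow i]
    rfl
  rw [hM]
  show (p : ℤ) ^ p ∣
    (Matrix.detRowAlternating (R := ℤ) (n := Fin N)).toMultilinearMap
      (fun i => ∑ o : Option (Fin M), gg i o)
  rw [MultilinearMap.map_sum]
  apply Finset.dvd_sum
  intro K _
  set t : Fin N → ℤ := fun i => Option.elim (K i) (p : ℤ) (fun k => c i k) with ht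
  set m : Fin N → (Fin N → ℤ) := fun i => Option.elim (K i) (e i) (fun k => b k) with hm
  have hgm : (fun i => gg i (K i)) = fun i => t i • m i := by
    funext i
    cases hKi : K i <;> simp [hgg, ht, hm, hKi]
  rw [hgm, (Matrix.detRowAlternating (R := ℤ) (n := Fin N)).toMultilinearMap.map_smul_univ t m]
  set S : Finset (Fin N) := Finset.univ.filter (fun i => K i = none) with hS
  by_cases hcard : p ≤ S.card
  · apply Dvd.dvd.mul_right
    have h1 : ∀ i ∈ S, t i = (p : ℤ) := by
      intro i hi
      have : K i = none := (Finset.mem_filter.mp hi).2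
      simp [ht, this]
    calc (p : ℤ) ^ p ∣ (p : ℤ) ^ S.card := pow_dvd_pow _ hcard
      _ ∣ ∏ i, t i := by
          rw [← Finset.prod_filter_mul_prod_filter_not Finset.univ (fun i => K i = none) t]
          exact Dvd.dvd.mul_right (by rw [Finset.prod_congr rfl h1, Finset.prod_const]) _
  · -- two equal rows among the `some` rows
    set T : Finset (Fin N) := Finset.univ.filter (fun i => ¬ K i = none) with hT'
    have h4 : S.card + T.card = N := by
      rw [hS, hT', Finset.card_filter_add_card_filter_not]
      simp
    have hT : T.card > ((Finset.univ (α := Option (Fin M))).erase none).card := by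
      have h3 : ((Finset.univ (α := Option (Fin M))).erase none).card = M := by
        rw [Finset.card_erase_of_mem (Finset.mem_univ _)]
        simp
      rw [h3]
      omega
    have hmaps : ∀ i ∈ T, K i ∈ (Finset.univ (α := Option (Fin M))).erase none := by
      intro i hi
      exact Finset.mem_erase.mpr ⟨(Finset.mem_filter.mp hi).2, Finset.mem_univ _⟩
    obtain ⟨i, hi, j, hj, hij, hKij⟩ :=
      Finset.exists_ne_map_eq_of_card_lt_of_maps_to hT hmaps
    have hmi : m i = m j := by
      obtain ⟨k, hk⟩ := Option.ne_none_iff_exists'.mp (Finset.mem_filter.mp hi).2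
      have hkj : K j = some k := by rw [← hKij, hk]
      simp [hm, hk, hkj]
    have hz := (Matrix.detRowAlternating (R := ℤ) (n := Fin N)).map_eq_zero_of_eq m hmi hij
    have hz' : (Matrix.detRowAlternating (R := ℤ) (n := Fin N)).toMultilinearMap m = 0 := hz
    rw [hz']
    simp

lemma coeff_expand' {K : Type*} [Semiring K] (h q : K[X]) (M m : ℕ) (hq : q.natDegree < M) :
    (q * h).coeff m = ∑ k : Fin M, q.coeff k * ((X : K[X]) ^ (k : ℕ) * h).coeff m := by
  conv_lhs => rw [q.as_sum_range' M hq]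
  rw [Finset.sum_mul, Polynomial.finset_sum_coeff, Fin.sum_univ_eq_sum_range
    (fun k => q.coeff k * ((X : K[X]) ^ k * h).coeff m)]
  refine Finset.sum_congr rfl fun k _ => ?_
  rw [← Polynomial.C_mul_X_pow_eq_monomial, mul_assoc, Polynomial.coeff_C_mul]

lemma prod_dvd_map (p : ℕ) [Fact p.Prime] (f : Polynomial ℤ) (hf : f.Monic)
    (hdvd : ∀ n : ℤ, (p : ℤ) ∣ f.eval n) :
    ((Finset.univ.val.map fun a : ZMod p => X - C a).prod ∣
      f.map (Int.castRingHom (ZMod p))) := by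
  
  set F := f.map (Int.castRingHom (ZMod p)) with hF
  have hFne : F ≠ 0 := (hf.map (Int.castRingHom (ZMod p))).ne_zero
  have hroot : ∀ a : ZMod p, F.IsRoot a := by
    intro a
    obtain ⟨n, rfl⟩ := ZMod.intCast_surjective a
    show F.eval _ = 0
    rw [hF, Polynomial.eval_intCast_map]
    exact (ZMod.intCast_zmod_eq_zero_iff_dvd _ p).mpr (hdvd n)
  rw [Multiset.prod_X_sub_C_dvd_iff_le_roots hFne]
  rw [Multiset.le_iff_subset Finset.univ.nodup]
  intro a ha
  exact Polynomial.mem_roots'.mpr ⟨hFne, hroot a⟩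

end helpers

lemma sylvester_row_f (f g : Polynomial ℤ) (i j : Fin (g.natDegree + f.natDegree))
    (hi : (i : ℕ) < g.natDegree) :
    _root_.sylvester f g i j = (f * X ^ (g.natDegree - 1 - (i : ℕ))).coeff
      (g.natDegree + f.natDegree - 1 - (j : ℕ)) := by
  have hj := j.isLt
  rw [Polynomial.coeff_mul_X_pow']
  simp only [_root_.sylvester, Matrix.of_apply, if_pos hi]
  by_cases h1 : (j : ℕ) ≤ (i : ℕ) + f.natDegree
  · rw [if_pos h1, if_pos (by omega)]
    congr 1
    omega
  · rw [if_neg h1, if_neg (by omega)]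

lemma sylvester_row_g (f g : Polynomial ℤ) (i j : Fin (g.natDegree + f.natDegree))
    (hi : ¬ (i : ℕ) < g.natDegree) :
    _root_.sylvester f g i j = (g * X ^ (f.natDegree - 1 - ((i : ℕ) - g.natDegree))).coeff
      (g.natDegree + f.natDegree - 1 - (j : ℕ)) := by
  have hj := j.isLt
  have hi2 := i.isLt
  rw [Polynomial.coeff_mul_X_pow']
  simp only [_root_.sylvester, Matrix.of_apply, if_neg hi]
  by_cases h1 : (j : ℕ) ≤ ((i : ℕ) - g.natDegree) + g.natDegree
  · rw [if_pos h1, if_pos (by omega)]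
    congr 1
    omega
  · rw [if_neg h1, if_neg (by omega)]


theorem padicValInt_resultant_ge_p (p : ℕ) (hp : p.Prime) (f g : Polynomial ℤ)
    (hf : f.Monic) (hg : g.Monic) (hr : _root_.resultant f g ≠ 0) (s : ℕ)
    (hs : 1 ≤ s) (hsp : s ≤ p)
    (hdvd : ∀ n : ℤ, (p : ℤ) ^ s ∣ f.eval n ∧ (p : ℤ) ^ s ∣ g.eval n) :
    p ≤ padicValInt p (_root_.resultant f g) := by
  haveI : Fact p.Prime := ⟨hp⟩
  classical
  set φ := Int.castRingHom (ZMod p) with hφ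
  set hbar : (ZMod p)[X] := (Finset.univ.val.map fun a : ZMod p => X - C a).prod with hhbar
  have hmon : hbar.Monic :=
    monic_multiset_prod_of_monic _ _ (fun a _ => monic_X_sub_C a)
  have hdeg : hbar.natDegree = p := by
    rw [hhbar, natDegree_multiset_prod_of_monic]
    · simp [Multiset.map_map, Function.comp, natDegree_X_sub_C]
    · intro q hq
      obtain ⟨a, _, rfl⟩ := Multiset.mem_map.mp hq
      exact monic_X_sub_C a
  have hps : (p : ℤ) ∣ (p : ℤ) ^ s := dvd_pow_self _ (by omega)
  have hdF : hbar ∣ f.map φ := prod_dvd_map p f hf (fun n => hps.trans (hdvd n).1)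
  have hdG : hbar ∣ g.map φ := prod_dvd_map p g hg (fun n => hps.trans (hdvd n).2)
  obtain ⟨u, hu⟩ := hdF
  obtain ⟨w, hw⟩ := hdG
  have hFne : f.map φ ≠ 0 := (hf.map φ).ne_zero
  have hGne : g.map φ ≠ 0 := (hg.map φ).ne_zero
  have hune : u ≠ 0 := by rintro rfl; rw [mul_zero] at hu; exact hFne hu
  have hwne : w ≠ 0 := by rintro rfl; rw [mul_zero] at hw; exact hGne hw
  have hud : p + u.natDegree = f.natDegree := by
    have h1 : (f.map φ).natDegree = f.natDegree := hf.natDegree_map φ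
    rw [hu, natDegree_mul hmon.ne_zero hune, hdeg] at h1
    exact h1
  have hwd : p + w.natDegree = g.natDegree := by
    have h1 : (g.map φ).natDegree = g.natDegree := hg.natDegree_map φ
    rw [hw, natDegree_mul hmon.ne_zero hwne, hdeg] at h1
    exact h1
  have key : ∀ i : Fin (g.natDegree + f.natDegree),
      ∃ d : Fin (g.natDegree + f.natDegree - p) → ZMod p,
      ∀ j : Fin (g.natDegree + f.natDegree),
        ((_root_.sylvester f g i j : ℤ) : ZMod p)
          = ∑ k, d k * ((X : (ZMod p)[X]) ^ (k : ℕ) * hbar).coeff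
              (g.natDegree + f.natDegree - 1 - (j : ℕ)) := by
    intro i
    have hi2 := i.isLt
    by_cases hi : (i : ℕ) < g.natDegree
    · refine ⟨fun k => (u * X ^ (g.natDegree - 1 - (i : ℕ))).coeff k, fun j => ?_⟩
      rw [sylvester_row_f f g i j hi]
      conv_lhs => rw [← eq_intCast φ, ← Polynomial.coeff_map φ]
      rw [Polynomial.map_mul, Polynomial.map_pow, Polynomial.map_X, hu,
        show hbar * u * X ^ (g.natDegree - 1 - (i : ℕ))
          = (u * X ^ (g.natDegree - 1 - (i : ℕ))) * hbar by ring]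
      rw [coeff_expand' hbar (u * X ^ (g.natDegree - 1 - (i : ℕ)))
        (g.natDegree + f.natDegree - p) _ (by
          have hb : (u * X ^ (g.natDegree - 1 - (i : ℕ))).natDegree
              ≤ u.natDegree + (g.natDegree - 1 - (i : ℕ)) :=
            natDegree_mul_le.trans (by rw [natDegree_X_pow])
          omega)]
    · refine ⟨fun k => (w * X ^ (f.natDegree - 1 - ((i : ℕ) - g.natDegree))).coeff k,
        fun j => ?_⟩
      rw [sylvester_row_g f g i j hi]
      conv_lhs => rw [← eq_intCast φ, ← Polynomial.coeff_map φ]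
      rw [Polynomial.map_mul, Polynomial.map_pow, Polynomial.map_X, hw,
        show hbar * w * X ^ (f.natDegree - 1 - ((i : ℕ) - g.natDegree))
          = (w * X ^ (f.natDegree - 1 - ((i : ℕ) - g.natDegree))) * hbar by ring]
      rw [coeff_expand' hbar (w * X ^ (f.natDegree - 1 - ((i : ℕ) - g.natDegree)))
        (g.natDegree + f.natDegree - p) _ (by
          have hb : (w * X ^ (f.natDegree - 1 - ((i : ℕ) - g.natDegree))).natDegree
              ≤ w.natDegree + (f.natDegree - 1 - ((i : ℕ) - g.natDegree)) :=
            natDegree_mul_le.trans (by rw [natDegree_X_pow])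
          omega)]
  choose dd hdd using key
  set c : Fin (g.natDegree + f.natDegree) → Fin (g.natDegree + f.natDegree - p) → ℤ :=
    fun i k => ((dd i k).val : ℤ) with hc
  set b : Fin (g.natDegree + f.natDegree - p) → Fin (g.natDegree + f.natDegree) → ℤ :=
    fun k j => ((((X : (ZMod p)[X]) ^ (k : ℕ) * hbar).coeff
      (g.natDegree + f.natDegree - 1 - (j : ℕ))).val : ℤ) with hb
  have hpd : ∀ i j, (p : ℤ) ∣ (_root_.sylvester f g i j - ∑ k, c i k * b k j) := by
    intro i j
    rw [← ZMod.intCast_zmod_eq_zero_iff_dvd]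
    push_cast [hc, hb, ZMod.natCast_val, ZMod.cast_id]
    rw [hdd i j]
    ring
  set e : Fin (g.natDegree + f.natDegree) → Fin (g.natDegree + f.natDegree) → ℤ :=
    fun i j => (_root_.sylvester f g i j - ∑ k, c i k * b k j) / p with he
  have hrows : ∀ i, (fun j => _root_.sylvester f g i j)
      = (∑ k, c i k • b k) + (p : ℤ) • e i := by
    intro i
    funext j
    have h2 := Int.mul_ediv_cancel' (hpd i j)
    simp only [Pi.add_apply, Pi.smul_apply, Finset.sum_apply, smul_eq_mul, he]
    linarith [h2]
  have hres : (p : ℤ) ^ p ∣ _root_.resultant f g := by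
    have h := det_dvd_of_rows p (g.natDegree + f.natDegree - p) (g.natDegree + f.natDegree)
      (by omega) b c e (fun i j => _root_.sylvester f g i j) hrows
    exact h
  rcases (padicValInt_dvd_iff p (_root_.resultant f g)).mp hres with h | h
  · exact absurd h hr
  · exact h
end

section
/- For a prime p and integer s ≥ 0, let f(x) = ∏_{j=0}^{β(s)−1} (x − j) and g(x) = p^s + ∏_{i=0}^{p−1} (x − i)^{s+1}, where β(s) = min{j : v_p(j!) ≥ s}. Then v_p(gcd(f(n), g(n))) = s for every integer n, and the resultant r of f and g satisfies v_p(r) = s·β(s). -/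
open Polynomial

lemma row_eval (h : Polynomial ℤ) (d N i : ℕ) (hd : h.natDegree ≤ d) (hiN : d + i < N) (x : ℤ) :
    (∑ j ∈ Finset.range N, (if j ≤ i + d then h.coeff (d + i - j) else 0) * x ^ (N - 1 - j))
      = h.eval x * x ^ (N - 1 - (d + i)) := by
  have hsub : Finset.range (i + d + 1) ⊆ Finset.range N := Finset.range_subset_range.2 (by omega)
  rw [← Finset.sum_subset hsub (fun j hj hj2 => by
    simp only [Finset.mem_range] at hj hj2
    rw [if_neg (by omega), zero_mul])]
  rw [Finset.sum_congr rfl (fun j hj => by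
    simp only [Finset.mem_range] at hj
    rw [if_pos (by omega)])]
  rw [← Finset.sum_range_reflect]
  rw [Finset.sum_congr rfl (fun j hj => by
    simp only [Finset.mem_range] at hj
    have e1 : d + i - (i + d + 1 - 1 - j) = j := by omega
    have e2 : N - 1 - (i + d + 1 - 1 - j) = j + (N - 1 - (d + i)) := by omega
    rw [e1, e2, pow_add, ← mul_assoc])]
  rw [← Finset.sum_mul]
  congr 1
  exact (Polynomial.eval_eq_sum_range' (by omega) x).symm

def auxM (n m : ℕ) (c : ℕ → ℤ) : Matrix (Fin (n + m)) (Fin (n + m)) ℤ :=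
  Matrix.of fun i j =>
    if (j : ℕ) < n then (if (i : ℕ) = (j : ℕ) then 1 else 0)
    else c ((j : ℕ) - n) ^ (n + m - 1 - (i : ℕ))

def auxV (m : ℕ) (c : ℕ → ℤ) : Matrix (Fin m) (Fin m) ℤ :=
  Matrix.of fun i j => c (j : ℕ) ^ (m - 1 - (i : ℕ))

lemma sylvester_mul_auxM (F g : Polynomial ℤ) (c : ℕ → ℤ)
    (hroot : ∀ t, t < F.natDegree → F.eval (c t) = 0)
    (i j : Fin (g.natDegree + F.natDegree)) :
    (_root_.sylvester F g * auxM g.natDegree F.natDegree c) i j =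
      if (j : ℕ) < g.natDegree then _root_.sylvester F g i j
      else if (i : ℕ) < g.natDegree then 0
      else g.eval (c ((j : ℕ) - g.natDegree))
             * c ((j : ℕ) - g.natDegree) ^ (g.natDegree + F.natDegree - 1 - (i : ℕ)) := by
  rw [Matrix.mul_apply]
  by_cases hj : (j : ℕ) < g.natDegree
  · rw [if_pos hj]
    calc (∑ k, _root_.sylvester F g i k * auxM g.natDegree F.natDegree c k j)
        = ∑ k, if k = j then _root_.sylvester F g i k else 0 :=
          Finset.sum_congr rfl (fun k _ => by
            unfold auxM
            simp only [Matrix.of_apply, if_pos hj]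
            by_cases hkj : k = j
            · subst hkj; simp
            · rw [if_neg (fun h => hkj (Fin.ext h)), if_neg hkj, mul_zero])
      _ = _root_.sylvester F g i j := by rw [Finset.sum_ite_eq' Finset.univ j]; simp
  · rw [if_neg hj]
    have hjN : (j : ℕ) < g.natDegree + F.natDegree := j.isLt
    have htm : (j : ℕ) - g.natDegree < F.natDegree := by omega
    by_cases hi : (i : ℕ) < g.natDegree
    · rw [if_pos hi]
      rw [show (∑ k, _root_.sylvester F g i k * auxM g.natDegree F.natDegree c k j)
          = ∑ k : Fin (g.natDegree + F.natDegree),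
            (fun t : ℕ => (if t ≤ (i : ℕ) + F.natDegree
                then F.coeff (F.natDegree + (i : ℕ) - t) else 0)
              * c ((j : ℕ) - g.natDegree)
                  ^ (g.natDegree + F.natDegree - 1 - t)) (k : ℕ) from
        Finset.sum_congr rfl (fun k _ => by
          unfold _root_.sylvester auxM
          simp only [Matrix.of_apply, if_pos hi, if_neg hj])]
      rw [Fin.sum_univ_eq_sum_range (fun t : ℕ => (if t ≤ (i : ℕ) + F.natDegree
                then F.coeff (F.natDegree + (i : ℕ) - t) else 0)
              * c ((j : ℕ) - g.natDegree)
                  ^ (g.natDegree + F.natDegree - 1 - t)) (g.natDegree + F.natDegree)]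
      rw [row_eval F F.natDegree (g.natDegree + F.natDegree) (i : ℕ) le_rfl (by omega)]
      rw [hroot _ htm, zero_mul]
    · rw [if_neg hi]
      rw [show (∑ k, _root_.sylvester F g i k * auxM g.natDegree F.natDegree c k j)
          = ∑ k : Fin (g.natDegree + F.natDegree),
            (fun t : ℕ => (if t ≤ ((i : ℕ) - g.natDegree) + g.natDegree
                then g.coeff (g.natDegree + ((i : ℕ) - g.natDegree) - t) else 0)
              * c ((j : ℕ) - g.natDegree)
                  ^ (g.natDegree + F.natDegree - 1 - t)) (k : ℕ) from
        Finset.sum_congr rfl (fun k _ => by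
          unfold _root_.sylvester auxM
          simp only [Matrix.of_apply, if_neg hi, if_neg hj])]
      rw [Fin.sum_univ_eq_sum_range (fun t : ℕ => (if t ≤ ((i : ℕ) - g.natDegree) + g.natDegree
                then g.coeff (g.natDegree + ((i : ℕ) - g.natDegree) - t) else 0)
              * c ((j : ℕ) - g.natDegree)
                  ^ (g.natDegree + F.natDegree - 1 - t)) (g.natDegree + F.natDegree)]
      rw [row_eval g g.natDegree (g.natDegree + F.natDegree) ((i : ℕ) - g.natDegree) le_rfl
        (by omega)]
      have : g.natDegree + ((i : ℕ) - g.natDegree) = (i : ℕ) := by omega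
      rw [this]

lemma auxV_det_ne_zero (m : ℕ) (c : ℕ → ℤ) (hc : ∀ a < m, ∀ b < m, c a = c b → a = b) :
    (auxV m c).det ≠ 0 := by
  have h1 : auxV m c = ((Matrix.vandermonde (fun j : Fin m => c j)).transpose).submatrix
      (Fin.revPerm : Equiv.Perm (Fin m)) id := by
    ext i j
    unfold auxV
    simp only [Matrix.of_apply, Matrix.submatrix_apply, Matrix.transpose_apply,
      Matrix.vandermonde_apply, Fin.revPerm_apply, id]
    congr 1
    rw [Fin.val_rev]
    omega
  rw [h1, Matrix.det_permute, Matrix.det_transpose]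
  apply mul_ne_zero
  · exact Units.ne_zero _ ∘ (by exact_mod_cast ·)
  · rw [Matrix.det_vandermonde_ne_zero_iff]
    intro a b hab
    exact Fin.ext (hc a a.isLt b b.isLt hab)

lemma sylvester_det_eq_prod_aux (F g : Polynomial ℤ) (c : ℕ → ℤ) (hFmon : F.Monic)
    (hroot : ∀ t, t < F.natDegree → F.eval (c t) = 0)
    (hc : ∀ a < F.natDegree, ∀ b < F.natDegree, c a = c b → a = b) :
    (_root_.sylvester F g).det = ∏ j ∈ Finset.range F.natDegree, g.eval (c j) := by
  classical
  have hL : ∀ i : Fin g.natDegree,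
      ((finSumFinEquiv (Sum.inl i) : Fin (g.natDegree + F.natDegree)) : ℕ) = (i : ℕ) :=
    fun i => by simp
  have hR : ∀ i : Fin F.natDegree,
      ((finSumFinEquiv (Sum.inr i) : Fin (g.natDegree + F.natDegree)) : ℕ) =
        g.natDegree + (i : ℕ) :=
    fun i => by simp
  have hP : (_root_.sylvester F g * auxM g.natDegree F.natDegree c).submatrix
        finSumFinEquiv finSumFinEquiv
      = Matrix.fromBlocks
          (Matrix.of fun (i j : Fin g.natDegree) =>
            if (j : ℕ) ≤ (i : ℕ) + F.natDegree
              then F.coeff (F.natDegree + (i : ℕ) - (j : ℕ)) else 0)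
          0
          (Matrix.of fun (i : Fin F.natDegree) (j : Fin g.natDegree) =>
            _root_.sylvester F g (finSumFinEquiv (Sum.inr i)) (finSumFinEquiv (Sum.inl j)))
          (Matrix.of fun (i j : Fin F.natDegree) =>
            g.eval (c (j : ℕ)) * auxV F.natDegree c i j) := by
    ext i j
    cases i with
    | inl i =>
      cases j with
      | inl j =>
        rw [Matrix.submatrix_apply, sylvester_mul_auxM F g c hroot,
          if_pos (by rw [hL]; exact j.isLt), Matrix.fromBlocks_apply₁₁]
        unfold _root_.sylvester
        simp only [Matrix.of_apply, hL]
        rw [if_pos i.isLt]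
      | inr j =>
        rw [Matrix.submatrix_apply, sylvester_mul_auxM F g c hroot,
          if_neg (by rw [hR]; omega), if_pos (by rw [hL]; exact i.isLt),
          Matrix.fromBlocks_apply₁₂]
        rfl
    | inr i =>
      cases j with
      | inl j =>
        rw [Matrix.submatrix_apply, sylvester_mul_auxM F g c hroot,
          if_pos (by rw [hL]; exact j.isLt), Matrix.fromBlocks_apply₂₁, Matrix.of_apply]
      | inr j =>
        rw [Matrix.submatrix_apply, sylvester_mul_auxM F g c hroot,
          if_neg (by rw [hR]; omega), if_neg (by rw [hR]; omega),
          Matrix.fromBlocks_apply₂₂, Matrix.of_apply, hR j, hR i]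
        unfold auxV
        rw [Matrix.of_apply]
        have e1 : g.natDegree + (j : ℕ) - g.natDegree = (j : ℕ) := by omega
        have e2 : g.natDegree + F.natDegree - 1 - (g.natDegree + (i : ℕ))
            = F.natDegree - 1 - (i : ℕ) := by have := i.isLt; omega
        rw [e1, e2]
  
  have hBdet : (Matrix.of fun (i j : Fin g.natDegree) =>
      if (j : ℕ) ≤ (i : ℕ) + F.natDegree
        then F.coeff (F.natDegree + (i : ℕ) - (j : ℕ)) else 0).det = 1 := by
    have htri : (Matrix.of fun (i j : Fin g.natDegree) =>
        if (j : ℕ) ≤ (i : ℕ) + F.natDegree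
          then F.coeff (F.natDegree + (i : ℕ) - (j : ℕ)) else 0).BlockTriangular id := by
      intro i j hij
      have hij' : (j : ℕ) < (i : ℕ) := hij
      rw [Matrix.of_apply, if_pos (by omega)]
      exact Polynomial.coeff_eq_zero_of_natDegree_lt (by omega)
    rw [Matrix.det_of_upperTriangular htri]
    apply Finset.prod_eq_one
    intro i _
    rw [Matrix.of_apply, if_pos (by omega)]
    have e0 : F.natDegree + (i : ℕ) - (i : ℕ) = F.natDegree := by omega
    rw [e0]
    exact hFmon.coeff_natDegree
  have hCmdet : (Matrix.of fun (i j : Fin F.natDegree) =>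
        g.eval (c (j : ℕ)) * auxV F.natDegree c i j).det
      = (∏ j : Fin F.natDegree, g.eval (c (j : ℕ))) * (auxV F.natDegree c).det :=
    Matrix.det_mul_row (fun j : Fin F.natDegree => g.eval (c (j : ℕ))) (auxV F.natDegree c)
  have hMblock : (auxM g.natDegree F.natDegree c).submatrix finSumFinEquiv finSumFinEquiv
      = Matrix.fromBlocks 1
          (Matrix.of fun (i : Fin g.natDegree) (j : Fin F.natDegree) =>
            c (j : ℕ) ^ (g.natDegree + F.natDegree - 1 - (i : ℕ)))
          0 (auxV F.natDegree c) := by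
    ext i j
    cases i with
    | inl i =>
      cases j with
      | inl j =>
        rw [Matrix.submatrix_apply, Matrix.fromBlocks_apply₁₁]
        unfold auxM
        rw [Matrix.of_apply, if_pos (by rw [hL]; exact j.isLt), hL i, hL j, Matrix.one_apply]
        simp [Fin.val_eq_val]
      | inr j =>
        rw [Matrix.submatrix_apply, Matrix.fromBlocks_apply₁₂]
        unfold auxM
        rw [Matrix.of_apply, if_neg (by rw [hR]; omega), Matrix.of_apply, hL i, hR j]
        have e1 : g.natDegree + (j : ℕ) - g.natDegree = (j : ℕ) := by omega
        rw [e1]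
    | inr i =>
      cases j with
      | inl j =>
        rw [Matrix.submatrix_apply, Matrix.fromBlocks_apply₂₁]
        unfold auxM
        rw [Matrix.of_apply, if_pos (by rw [hL]; exact j.isLt), hR i, hL j]
        rw [if_neg (by omega), Matrix.zero_apply]
      | inr j =>
        rw [Matrix.submatrix_apply, Matrix.fromBlocks_apply₂₂]
        unfold auxM auxV
        rw [Matrix.of_apply, if_neg (by rw [hR j]; omega), Matrix.of_apply, hR i, hR j]
        have e1 : g.natDegree + (j : ℕ) - g.natDegree = (j : ℕ) := by omega
        have e2 : g.natDegree + F.natDegree - 1 - (g.natDegree + (i : ℕ))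
            = F.natDegree - 1 - (i : ℕ) := by have := i.isLt; omega
        rw [e1, e2]
  have hMdet : (auxM g.natDegree F.natDegree c).det = (auxV F.natDegree c).det := by
    rw [← Matrix.det_submatrix_equiv_self finSumFinEquiv, hMblock,
      Matrix.det_fromBlocks_zero₂₁, Matrix.det_one, one_mul]
  have key : (_root_.sylvester F g).det * (auxV F.natDegree c).det
      = (∏ j : Fin F.natDegree, g.eval (c (j : ℕ))) * (auxV F.natDegree c).det := by
    calc (_root_.sylvester F g).det * (auxV F.natDegree c).det
        = (_root_.sylvester F g).det * (auxM g.natDegree F.natDegree c).det := by rw [hMdet]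
      _ = (_root_.sylvester F g * auxM g.natDegree F.natDegree c).det := (Matrix.det_mul _ _).symm
      _ = ((_root_.sylvester F g * auxM g.natDegree F.natDegree c).submatrix
            finSumFinEquiv finSumFinEquiv).det :=
          (Matrix.det_submatrix_equiv_self _ _).symm
      _ = (∏ j : Fin F.natDegree, g.eval (c (j : ℕ))) * (auxV F.natDegree c).det := by
          rw [hP, Matrix.det_fromBlocks_zero₁₂, hBdet, one_mul, hCmdet]
  have hfinal := mul_right_cancel₀ (auxV_det_ne_zero F.natDegree c hc) key
  rw [hfinal]
  exact Fin.prod_univ_eq_prod_range (fun j => g.eval (c j)) F.natDegree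

lemma pow_dvd_factorial_mul (p s : ℕ) (hp : 1 ≤ p) : p ^ s ∣ (p * s).factorial := by
  induction s with
  | zero => simp
  | succ s ih =>
    have h1 : p * (s + 1) = (p * s + p - 1) + 1 := by
      rw [Nat.mul_succ]; omega
    rw [h1, Nat.factorial_succ]
    have h2 : p ∣ p * s + p - 1 + 1 := by
      have e : p * s + p - 1 + 1 = p * (s + 1) := by rw [Nat.mul_succ]; omega
      rw [e]; exact Dvd.intro _ rfl
    have h3 : (p * s).factorial ∣ (p * s + p - 1).factorial :=
      Nat.factorial_dvd_factorial (by omega)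
    rw [pow_succ']
    exact mul_dvd_mul h2 (ih.trans h3)

lemma pow_dvd_beta_factorial (p s : ℕ) (hp : p.Prime) : p ^ s ∣ (beta p s).factorial := by
  have hwit : s ≤ padicValNat p (Nat.factorial (p * s)) := by
    have hd := pow_dvd_factorial_mul p s hp.one_lt.le
    rw [← Nat.factorization_def _ hp]
    exact (Nat.Prime.pow_dvd_iff_le_factorization hp (Nat.factorial_ne_zero _)).mp hd
  have hmem : beta p s ∈ {j : ℕ | s ≤ padicValNat p (Nat.factorial j)} :=
    Nat.sInf_mem ⟨p * s, hwit⟩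
  have hle : s ≤ padicValNat p (Nat.factorial (beta p s)) := hmem
  rw [← Nat.factorization_def _ hp] at hle
  exact (Nat.Prime.pow_dvd_iff_le_factorization hp (Nat.factorial_ne_zero _)).mpr hle

lemma descPochhammer_eval_prod (k : ℕ) (x : ℤ) :
    (∏ j ∈ Finset.range k, (x - (j : ℤ))) = (descPochhammer ℤ k).eval x := by
  induction k with
  | zero => simp
  | succ k ih =>
    rw [Finset.prod_range_succ, ih, descPochhammer_succ_right]
    simp

lemma factorial_dvd_prod (k : ℕ) (x : ℤ) :
    ((k.factorial : ℤ)) ∣ ∏ j ∈ Finset.range k, (x - (j : ℤ)) := by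
  rw [descPochhammer_eval_prod, Polynomial.eval_eq_smeval,
    Ring.descPochhammer_eq_factorial_smul_choose, nsmul_eq_mul]
  exact Dvd.intro _ rfl

lemma val_g_eval (p s : ℕ) (hp : p.Prime) (n : ℤ) :
    ((p : ℤ) ^ s ∣ ((p : ℤ) ^ s + ∏ i ∈ Finset.range p, (n - (i : ℤ)) ^ (s + 1)))
    ∧ ¬ ((p : ℤ) ^ (s + 1) ∣ ((p : ℤ) ^ s + ∏ i ∈ Finset.range p, (n - (i : ℤ)) ^ (s + 1))) := by
  have hdvd1 : (p : ℤ) ∣ ∏ i ∈ Finset.range p, (n - (i : ℤ)) := by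
    have h0 : 0 ≤ n % p := Int.emod_nonneg n (by exact_mod_cast hp.ne_zero)
    have h1 : n % p < p := Int.emod_lt_of_pos n (by exact_mod_cast hp.pos)
    have hmem : (n % p).toNat ∈ Finset.range p := Finset.mem_range.2 (by omega)
    refine dvd_trans ?_ (Finset.dvd_prod_of_mem _ hmem)
    have e0 : (((n % p).toNat : ℤ)) = n % p := Int.toNat_of_nonneg h0
    rw [e0]
    have e1 : n - n % p = p * (n / p) := by rw [Int.emod_def]; ring
    rw [e1]
    exact Dvd.intro _ rfl
  have hQ : (p : ℤ) ^ (s + 1) ∣ ∏ i ∈ Finset.range p, (n - (i : ℤ)) ^ (s + 1) := by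
    rw [Finset.prod_pow]
    exact pow_dvd_pow_of_dvd hdvd1 (s + 1)
  constructor
  · exact dvd_add dvd_rfl ((pow_dvd_pow _ (Nat.le_succ s)).trans hQ)
  · intro h
    have hps : (p : ℤ) ^ (s + 1) ∣ (p : ℤ) ^ s := by
      have := dvd_sub h hQ
      simpa using this
    rw [pow_succ] at hps
    have hne : (p : ℤ) ^ s ≠ 0 := pow_ne_zero _ (by exact_mod_cast hp.ne_zero)
    have hdvd_one : (p : ℤ) ∣ 1 := by
      rw [← mul_dvd_mul_iff_left hne, mul_one]
      exact hps
    have := Int.le_of_dvd one_pos hdvd_one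
    have := hp.one_lt
    omega

theorem construction_large_s (p : ℕ) (hp : p.Prime) (s : ℕ) (f g : Polynomial ℤ)
    (hfdef : f = ∏ j ∈ Finset.range (beta p s), (X - C (j : ℤ)))
    (hgdef : g = C ((p : ℤ) ^ s) + ∏ i ∈ Finset.range p, (X - C (i : ℤ)) ^ (s + 1)) :
    (∀ n : ℤ, padicValNat p (Int.gcd (f.eval n) (g.eval n)) = s) ∧
      padicValInt p (_root_.resultant f g) = s * beta p s := by
  subst hfdef hgdef
  set βs := beta p s with hβs
  have hgev : ∀ n : ℤ,
      (C ((p : ℤ) ^ s) + ∏ i ∈ Finset.range p, (X - C (i : ℤ)) ^ (s + 1)).eval n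
        = (p : ℤ) ^ s + ∏ i ∈ Finset.range p, (n - (i : ℤ)) ^ (s + 1) := fun n => by
    simp [eval_prod]
  have hfev : ∀ n : ℤ,
      (∏ j ∈ Finset.range βs, (X - C ((j : ℕ) : ℤ))).eval n
        = ∏ j ∈ Finset.range βs, (n - (j : ℤ)) := fun n => by
    simp [eval_prod]
  -- facts about g values
  have hg : ∀ n : ℤ,
      ((p : ℤ) ^ s ∣ (C ((p : ℤ) ^ s) + ∏ i ∈ Finset.range p, (X - C (i : ℤ)) ^ (s + 1)).eval n)
      ∧ ¬ ((p : ℤ) ^ (s + 1) ∣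
          (C ((p : ℤ) ^ s) + ∏ i ∈ Finset.range p, (X - C (i : ℤ)) ^ (s + 1)).eval n) := by
    intro n
    rw [hgev n]
    exact val_g_eval p s hp n
  have hgne : ∀ n : ℤ,
      (C ((p : ℤ) ^ s) + ∏ i ∈ Finset.range p, (X - C (i : ℤ)) ^ (s + 1)).eval n ≠ 0 := by
    intro n h
    exact (hg n).2 (h ▸ dvd_zero _)
  have hfd : ∀ n : ℤ,
      (p : ℤ) ^ s ∣ (∏ j ∈ Finset.range βs, (X - C ((j : ℕ) : ℤ))).eval n := by
    intro n
    rw [hfev n]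
    refine dvd_trans ?_ (factorial_dvd_prod βs n)
    have := pow_dvd_beta_factorial p s hp
    exact_mod_cast Int.natCast_dvd_natCast.mpr this
  constructor
  · intro n
    set G := Int.gcd ((∏ j ∈ Finset.range βs, (X - C ((j : ℕ) : ℤ))).eval n)
      ((C ((p : ℤ) ^ s) + ∏ i ∈ Finset.range p, (X - C (i : ℤ)) ^ (s + 1)).eval n) with hG
    have hG0 : G ≠ 0 := fun h => hgne n (Int.gcd_eq_zero_iff.mp h).2
    have hdG : p ^ s ∣ G := by
      have := Int.dvd_gcd (hfd n) (hg n).1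
      rw [← hG] at this
      exact_mod_cast this
    have hndG : ¬ p ^ (s + 1) ∣ G := by
      intro h
      apply (hg n).2
      have h2 : ((G : ℕ) : ℤ) ∣
          (C ((p : ℤ) ^ s) + ∏ i ∈ Finset.range p, (X - C (i : ℤ)) ^ (s + 1)).eval n := by
        rw [hG]; exact Int.gcd_dvd_right _ _
      exact dvd_trans (by exact_mod_cast h) h2
    have e1 : s ≤ padicValNat p G := by
      rw [← Nat.factorization_def _ hp]
      exact (Nat.Prime.pow_dvd_iff_le_factorization hp hG0).mp hdG
    have e2 : ¬ (s + 1) ≤ padicValNat p G := by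
      intro h
      apply hndG
      rw [← Nat.factorization_def _ hp] at h
      exact (Nat.Prime.pow_dvd_iff_le_factorization hp hG0).mpr h
    omega
  · -- resultant
    have hFdeg : (∏ j ∈ Finset.range βs, (X - C ((j : ℕ) : ℤ))).natDegree = βs := by
      rw [natDegree_prod_of_monic _ _ (fun i _ => monic_X_sub_C _),
        Finset.sum_congr rfl (fun i _ => natDegree_X_sub_C ((i : ℕ) : ℤ))]
      simp
    have hdet : _root_.resultant (∏ j ∈ Finset.range βs, (X - C ((j : ℕ) : ℤ)))
        (C ((p : ℤ) ^ s) + ∏ i ∈ Finset.range p, (X - C (i : ℤ)) ^ (s + 1))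
        = ∏ j ∈ Finset.range βs,
            (C ((p : ℤ) ^ s) + ∏ i ∈ Finset.range p, (X - C (i : ℤ)) ^ (s + 1)).eval ((j : ℕ) : ℤ) := by
      unfold _root_.resultant
      rw [sylvester_det_eq_prod_aux _ _ (fun j => ((j : ℕ) : ℤ))
        (monic_prod_of_monic _ _ (fun i _ => monic_X_sub_C _))
        (fun t ht => by
          rw [hFdeg] at ht
          rw [eval_prod]
          exact Finset.prod_eq_zero (Finset.mem_range.2 ht) (by simp))
        (fun a _ b _ hab => Nat.cast_injective hab), hFdeg]
    rw [hdet]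
    unfold padicValInt
    have habs : (∏ j ∈ Finset.range βs,
        (C ((p : ℤ) ^ s) + ∏ i ∈ Finset.range p, (X - C (i : ℤ)) ^ (s + 1)).eval ((j : ℕ) : ℤ)).natAbs
        = ∏ j ∈ Finset.range βs,
          ((C ((p : ℤ) ^ s) + ∏ i ∈ Finset.range p, (X - C (i : ℤ)) ^ (s + 1)).eval ((j : ℕ) : ℤ)).natAbs := by
      exact map_prod Int.natAbsHom
        (fun j : ℕ => (C ((p : ℤ) ^ s) + ∏ i ∈ Finset.range p, (X - C (i : ℤ)) ^ (s + 1)).eval ((j : ℕ) : ℤ))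
        (Finset.range βs)
    rw [habs]
    have hne : ∀ j ∈ Finset.range βs,
        ((C ((p : ℤ) ^ s)
          + ∏ i ∈ Finset.range p, (X - C (i : ℤ)) ^ (s + 1)).eval ((j : ℕ) : ℤ)).natAbs ≠ 0 := by
      intro j _
      exact Int.natAbs_ne_zero.mpr (hgne ((j : ℕ) : ℤ))
    rw [← Nat.factorization_def _ hp, Nat.factorization_prod hne, Finset.sum_apply']
    have hterm : ∀ j ∈ Finset.range βs,
        (((C ((p : ℤ) ^ s)
          + ∏ i ∈ Finset.range p, (X - C (i : ℤ)) ^ (s + 1)).eval ((j : ℕ) : ℤ)).natAbs).factorization p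
          = s := by
      intro j _
      obtain ⟨hd1', hd2'⟩ := hg ((j : ℕ) : ℤ)
      have hz0 : ((C ((p : ℤ) ^ s) + ∏ i ∈ Finset.range p, (X - C (i : ℤ)) ^ (s + 1)).eval ((j : ℕ) : ℤ)).natAbs ≠ 0 := Int.natAbs_ne_zero.mpr (hgne _)
      have hd1 : p ^ s ∣ ((C ((p : ℤ) ^ s) + ∏ i ∈ Finset.range p, (X - C (i : ℤ)) ^ (s + 1)).eval ((j : ℕ) : ℤ)).natAbs := Int.natCast_dvd.mp (by exact_mod_cast hd1')
      have hd2 : ¬ p ^ (s + 1) ∣ ((C ((p : ℤ) ^ s) + ∏ i ∈ Finset.range p, (X - C (i : ℤ)) ^ (s + 1)).eval ((j : ℕ) : ℤ)).natAbs := fun h =>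
        hd2' (by exact_mod_cast Int.natCast_dvd.mpr h)
      have e1 : s ≤ ((C ((p : ℤ) ^ s) + ∏ i ∈ Finset.range p, (X - C (i : ℤ)) ^ (s + 1)).eval ((j : ℕ) : ℤ)).natAbs.factorization p :=
        (Nat.Prime.pow_dvd_iff_le_factorization hp hz0).mp hd1
      have e2 : ¬ (s + 1) ≤ ((C ((p : ℤ) ^ s) + ∏ i ∈ Finset.range p, (X - C (i : ℤ)) ^ (s + 1)).eval ((j : ℕ) : ℤ)).natAbs.factorization p := fun h =>
        hd2 ((Nat.Prime.pow_dvd_iff_le_factorization hp hz0).mpr h)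
      omega
    rw [Finset.sum_congr rfl hterm, Finset.sum_const, Finset.card_range, smul_eq_mul, mul_comm]
end
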